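/- arXiv:2308.02578 — 6 statements merged into one kernel-verified Lean document; each statement's English description precedes it below -/
import Mathlib

section
/- Let (Ω, μ) be a measure space and let f be a measurable function in L¹(μ) + L^∞(μ). Then f ∈ R₀ = { f : μ{|f| > λ} < ∞ for all λ > 0 } if and only if for every δ > 0 there exist g_δ ∈ L¹(μ) and h_δ ∈ L^∞(μ) with ‖h_δ‖_∞ ≤ δ and f = g_δ + h_δ. -/
open MeasureTheory Filter
open scoped ENNReal

/-- A function `f ∈ L¹ + L^∞` has all its distribution values `μ{|f| > λ}` finite
(`λ > 0`) if and only if for every `δ > 0` it decomposes as `f = g + h` with `g`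
integrable and `‖h‖_∞ ≤ δ`. -/
theorem fava_space_characterization
    {Ω : Type*} [MeasurableSpace Ω] (μ : Measure Ω)
    (f : Ω → ℝ) (hmeas : Measurable f)
    (hL1Linf : ∃ g h : Ω → ℝ, Integrable g μ ∧ MemLp h ⊤ μ ∧ f = g + h) :
    (∀ l : ℝ, 0 < l → μ {t | l < |f t|} < ⊤) ↔
      (∀ δ : ℝ, 0 < δ → ∃ g h : Ω → ℝ, Integrable g μ ∧ MemLp h ⊤ μ ∧
        eLpNorm h ⊤ μ ≤ ENNReal.ofReal δ ∧ f = g + h) := by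
  constructor
  · intro hdist δ hδ
    obtain ⟨g₀, h₀, hg₀, hh₀, hf₀⟩ := hL1Linf
    set C : ℝ := (eLpNorm h₀ ⊤ μ).toReal with hC
    have hbound : ∀ᵐ t ∂μ, |h₀ t| ≤ C := by
      filter_upwards [ae_le_eLpNormEssSup (f := h₀) (μ := μ)] with t ht
      have htop : eLpNormEssSup h₀ μ ≠ ⊤ := by
        rw [← eLpNorm_exponent_top]; exact hh₀.eLpNorm_ne_top
      have : (‖h₀ t‖₊ : ℝ≥0∞).toReal ≤ (eLpNormEssSup h₀ μ).toReal :=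
        ENNReal.toReal_mono htop ht
      simpa [hC, eLpNorm_exponent_top, Real.norm_eq_abs] using this
    -- truncation
    set h : Ω → ℝ := fun t => max (min (f t) δ) (-δ) with hhdef
    set g : Ω → ℝ := fun t => f t - h t with hgdef
    have hhm : Measurable h := (hmeas.min measurable_const).max measurable_const
    have hgm : Measurable g := hmeas.sub hhm
    have hhabs : ∀ t, |h t| ≤ δ := by
      intro t
      rw [abs_le]
      constructor
      · exact le_max_right _ _
      · exact max_le (min_le_right _ _) (le_of_lt (by linarith))
    have hgsupp : ∀ t, g t ≠ 0 → δ < |f t| := by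
      intro t hgt
      by_contra hle
      push_neg at hle
      rw [abs_le] at hle
      apply hgt
      simp only [hgdef, hhdef]
      rw [min_eq_left hle.2, max_eq_left hle.1, sub_self]
    have hgabs : ∀ t, |g t| ≤ |f t| := by
      intro t
      simp only [hgdef, hhdef]
      rcases le_total (f t) δ with hfd | hfd
      · rcases le_total (-δ) (f t) with hfd' | hfd'
        · rw [min_eq_left hfd, max_eq_left hfd', sub_self]; simp [abs_nonneg]
        · rw [min_eq_left (hfd'.trans (by linarith)), max_eq_right hfd']
          rw [abs_of_nonpos (by linarith), abs_of_nonpos (hfd'.trans (by linarith))]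
          linarith
      · rw [min_eq_right hfd, max_eq_left (by linarith)]
        rw [abs_of_nonneg (by linarith), abs_of_nonneg (by linarith)]
        linarith
    -- integrable majorant
    have hfin : μ {t | δ < |f t|} < ⊤ := hdist δ hδ
    have hsetm : MeasurableSet {t | δ < |f t|} := measurableSet_lt measurable_const hmeas.abs
    have hind : Integrable ({t | δ < |f t|}.indicator fun _ => C) μ := by
      rw [integrable_indicator_iff hsetm]
      exact integrableOn_const hfin.ne
    have hmaj : Integrable (fun t => |g₀ t| + {t | δ < |f t|}.indicator (fun _ => C) t) μ :=
      hg₀.abs.add hind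
    have hgint : Integrable g μ := by
      refine Integrable.mono' hmaj hgm.aestronglyMeasurable ?_
      filter_upwards [hbound] with t ht
      rw [Real.norm_eq_abs]
      by_cases hz : g t = 0
      · rw [hz, abs_zero]
        have hC0 : (0:ℝ) ≤ C := ENNReal.toReal_nonneg
        have : (0:ℝ) ≤ {t | δ < |f t|}.indicator (fun _ => C) t :=
          Set.indicator_nonneg (fun x _ => hC0) t
        positivity
      · have hmem : t ∈ {t | δ < |f t|} := hgsupp t hz
        rw [Set.indicator_of_mem hmem]
        have h1 : |g t| ≤ |f t| := hgabs t
        have h2 : |f t| ≤ |g₀ t| + |h₀ t| := by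
          rw [hf₀]; exact abs_add_le _ _
        linarith
    have hhmem : MemLp h ⊤ μ :=
      memLp_top_of_bound hhm.aestronglyMeasurable δ
        (Filter.Eventually.of_forall fun t => by rw [Real.norm_eq_abs]; exact hhabs t)
    refine ⟨g, h, hgint, hhmem, ?_, ?_⟩
    · rw [eLpNorm_exponent_top]
      exact eLpNormEssSup_le_of_ae_bound
        (Filter.Eventually.of_forall fun t => by rw [Real.norm_eq_abs]; exact hhabs t)
    · funext t; simp [hgdef]
  · intro hdec l hl
    obtain ⟨g, h, hg, hh, hnorm, hf⟩ := hdec (l / 2) (by positivity)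
    have hbound : ∀ᵐ t ∂μ, |h t| ≤ l / 2 := by
      filter_upwards [ae_le_eLpNormEssSup (f := h) (μ := μ)] with t ht
      rw [← eLpNorm_exponent_top] at ht
      have := ht.trans hnorm
      rw [← ENNReal.ofReal_le_ofReal_iff (by positivity)]
      calc ENNReal.ofReal |h t| = (‖h t‖₊ : ℝ≥0∞) := by
            rw [← Real.norm_eq_abs, ofReal_norm_eq_enorm, enorm_eq_nnnorm]
        _ ≤ _ := this
    have hsub : μ {t | l < |f t|} ≤ μ {t | l / 2 ≤ |g t|} := by
      apply measure_mono_ae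
      filter_upwards [hbound] with t ht hmem
      have hmem' : l < |f t| := hmem
      have habs : |f t| ≤ |g t| + |h t| := by rw [hf]; exact abs_add_le _ _
      show l / 2 ≤ |g t|
      linarith
    exact lt_of_le_of_lt hsub (hg.abs.measure_ge_lt_top (by positivity))
end

section
/- Let (Ω, μ) be a measure space and suppose A : L¹(μ) + L^∞(μ) → L¹(μ) + L^∞(μ) is a linear map with A(L¹) ⊆ L¹, A(L^∞) ⊆ L^∞, and ‖A(h)‖_∞ ≤ c‖h‖_∞ for some c > 0 and all h ∈ L^∞. Then A maps Fava's space R₀ into itself, where R₀ = { f ∈ L¹ + L^∞ : μ{|f| > λ} < ∞ for all λ > 0 }. -/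
open MeasureTheory
open scoped ENNReal NNReal

/-- A function lies in `L¹ + L^∞`. -/
def InL1PlusLinf {Ω : Type*} [MeasurableSpace Ω] (μ : Measure Ω) (f : Ω → ℝ) : Prop :=
  ∃ g h : Ω → ℝ, Integrable g μ ∧ MemLp h ⊤ μ ∧ f = g + h

/-- δ-decomposition of a function in Fava's space `R₀`. -/
theorem fava_decomp {Ω : Type*} [MeasurableSpace Ω] (μ : Measure Ω) (f : Ω → ℝ)
    (hf : InL1PlusLinf μ f)
    (hfR₀ : ∀ l : ℝ, 0 < l → μ {t | l < |f t|} < ⊤)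
    (δ : ℝ) (hδ : 0 < δ) :
    ∃ g h : Ω → ℝ, Integrable g μ ∧ MemLp h ⊤ μ ∧
      eLpNorm h ⊤ μ ≤ ENNReal.ofReal δ ∧ f = g + h := by
  obtain ⟨g₀, h₀, hg₀, hh₀, hfe⟩ := hf
  have hfm : AEStronglyMeasurable f μ := by
    rw [hfe]; exact hg₀.aestronglyMeasurable.add hh₀.aestronglyMeasurable
  set h : Ω → ℝ := fun t => max (-δ) (min δ (f t)) with hh_def
  set g : Ω → ℝ := fun t => f t - h t with hg_def
  have hcont : Continuous fun x : ℝ => max (-δ) (min δ x) :=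
    continuous_const.max (continuous_const.min continuous_id)
  have hhm : AEStronglyMeasurable h μ := hcont.comp_aestronglyMeasurable hfm
  have hhb : ∀ t, |h t| ≤ δ := by
    intro t
    rw [abs_le]
    constructor
    · exact le_max_left _ _
    · exact max_le (by linarith) (min_le_left _ _)
  have hhmem : MemLp h ⊤ μ :=
    memLp_top_of_bound hhm δ (Filter.Eventually.of_forall fun t => by
      rw [Real.norm_eq_abs]; exact hhb t)
  have hhnorm : eLpNorm h ⊤ μ ≤ ENNReal.ofReal δ := by
    rw [eLpNorm_exponent_top]
    exact eLpNormEssSup_le_of_ae_bound (Filter.Eventually.of_forall fun t => by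
      rw [Real.norm_eq_abs]; exact hhb t)
  -- the key pointwise facts about g
  have hg_zero : ∀ t, |f t| ≤ δ → g t = 0 := by
    intro t ht
    rw [abs_le] at ht
    simp only [hg_def, hh_def]
    rw [min_eq_right ht.2, max_eq_right ht.1, sub_self]
  have hg_le : ∀ t, |g t| ≤ |f t| := by
    intro t
    rcases le_or_gt (|f t|) δ with hle | hlt
    · rw [hg_zero t hle]; simp [abs_nonneg]
    · rcases lt_abs.mp hlt with hpos | hneg
      · have h1 : min δ (f t) = δ := min_eq_left hpos.le
        have h2 : max (-δ) δ = δ := max_eq_right (by linarith)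
        simp only [hg_def, hh_def, h1, h2]
        rw [abs_of_nonneg (by linarith), abs_of_nonneg (by linarith)]
        linarith
      · have hflt : f t < -δ := by linarith
        have h1 : min δ (f t) = f t := min_eq_right (by linarith)
        have h2 : max (-δ) (f t) = -δ := max_eq_left (by linarith)
        simp only [hg_def, hh_def, h1, h2]
        rw [abs_of_nonpos (by linarith), abs_of_nonpos (by linarith)]
        linarith
  -- dominating function
  set f' := hfm.mk f with hf'_def
  have hf'm : StronglyMeasurable f' := hfm.stronglyMeasurable_mk
  have hf'ae : f =ᵐ[μ] f' := hfm.ae_eq_mk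
  set s : Set Ω := {t | δ < |f' t|} with hs_def
  have hsm : MeasurableSet s := by
    have : Measurable f' := hf'm.measurable
    exact measurableSet_lt measurable_const this.abs
  have hsfin : μ s < ⊤ := by
    have hseq : s =ᵐ[μ] {t | δ < |f t|} := by
      filter_upwards [hf'ae] with t ht
      show (δ < |f' t|) = (δ < |f t|)
      rw [ht]
    calc μ s = μ {t | δ < |f t|} := measure_congr hseq
      _ < ⊤ := hfR₀ δ hδ
  set M : ℝ := (eLpNorm h₀ ⊤ μ).toReal with hM_def
  have hM0 : 0 ≤ M := ENNReal.toReal_nonneg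
  have hMae : ∀ᵐ t ∂μ, |h₀ t| ≤ M := by
    filter_upwards [ae_le_eLpNormEssSup (f := h₀) (μ := μ)] with t ht
    have hlt : eLpNormEssSup h₀ μ < ⊤ := by
      rw [← eLpNorm_exponent_top]; exact hh₀.2
    have h2 := (ENNReal.toReal_le_toReal ENNReal.coe_ne_top hlt.ne).mpr ht
    rw [← Real.norm_eq_abs]
    calc ‖h₀ t‖ = ((‖h₀ t‖₊ : ℝ≥0∞)).toReal := by simp
      _ ≤ (eLpNormEssSup h₀ μ).toReal := h2
      _ = M := by rw [hM_def, eLpNorm_exponent_top]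
  set φ : Ω → ℝ := s.indicator (fun t => |g₀ t| + M) with hφ_def
  have hφint : Integrable φ μ := by
    rw [hφ_def, integrable_indicator_iff hsm]
    exact (hg₀.abs.integrableOn).add
      (integrableOn_const (C := M) hsfin.ne)
  have hgm : AEStronglyMeasurable g μ := hfm.sub hhm
  have hgint : Integrable g μ := by
    refine hφint.mono' hgm ?_
    filter_upwards [hMae, hf'ae] with t hMt hft
    rw [Real.norm_eq_abs]
    rcases le_or_gt (|f t|) δ with hle | hlt
    · rw [hg_zero t hle]
      simp only [abs_zero]
      exact Set.indicator_nonneg (fun x _ => by positivity) t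
    · have hts : t ∈ s := by rw [hs_def, Set.mem_setOf_eq, ← hft]; exact hlt
      rw [hφ_def, Set.indicator_of_mem hts]
      have : |f t| ≤ |g₀ t| + M := by
        have : f t = g₀ t + h₀ t := congrFun hfe t
        calc |f t| = |g₀ t + h₀ t| := by rw [this]
          _ ≤ |g₀ t| + |h₀ t| := abs_add_le _ _
          _ ≤ |g₀ t| + M := by linarith
      exact (hg_le t).trans this
  exact ⟨g, h, hgint, hhmem, hhnorm, by funext t; simp [hg_def]⟩

/-- A linear map on `L¹ + L^∞` preserving `L¹` and `L^∞`, and bounded in the uniform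
norm, maps Fava's space `R₀` into itself. -/
theorem fava_space_invariant
    {Ω : Type*} [MeasurableSpace Ω] (μ : Measure Ω)
    (A : (Ω → ℝ) → (Ω → ℝ))
    (hadd : ∀ f g : Ω → ℝ, InL1PlusLinf μ f → InL1PlusLinf μ g →
      A (f + g) = A f + A g)
    (hsmul : ∀ (c : ℝ) (f : Ω → ℝ), InL1PlusLinf μ f → A (c • f) = c • A f)
    (hL1 : ∀ g : Ω → ℝ, Integrable g μ → Integrable (A g) μ)
    (c : ℝ) (hc : 0 < c)
    (hLinf : ∀ h : Ω → ℝ, MemLp h ⊤ μ → MemLp (A h) ⊤ μ ∧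
      eLpNorm (A h) ⊤ μ ≤ ENNReal.ofReal c * eLpNorm h ⊤ μ)
    (f : Ω → ℝ) (hf : InL1PlusLinf μ f)
    (hfR₀ : ∀ l : ℝ, 0 < l → μ {t | l < |f t|} < ⊤) :
    InL1PlusLinf μ (A f) ∧ ∀ l : ℝ, 0 < l → μ {t | l < |A f t|} < ⊤ := by
  have key : ∀ δ : ℝ, 0 < δ → ∃ g h : Ω → ℝ, Integrable (A g) μ ∧ MemLp (A h) ⊤ μ ∧
      eLpNorm (A h) ⊤ μ ≤ ENNReal.ofReal (c * δ) ∧ A f = A g + A h := by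
    intro δ hδ
    obtain ⟨g, h, hg, hh, hhn, hfe⟩ := fava_decomp μ f hf hfR₀ δ hδ
    have hgcl : InL1PlusLinf μ g := ⟨g, 0, hg, MemLp.zero, (add_zero g).symm⟩
    have hhcl : InL1PlusLinf μ h := ⟨0, h, integrable_zero _ _ _, hh, (zero_add h).symm⟩
    have hAfe : A f = A g + A h := by rw [hfe]; exact hadd g h hgcl hhcl
    obtain ⟨hAh, hAhn⟩ := hLinf h hh
    refine ⟨g, h, hL1 g hg, hAh, ?_, hAfe⟩
    calc eLpNorm (A h) ⊤ μ ≤ ENNReal.ofReal c * eLpNorm h ⊤ μ := hAhn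
      _ ≤ ENNReal.ofReal c * ENNReal.ofReal δ := by
          exact mul_le_mul_right hhn _
      _ = ENNReal.ofReal (c * δ) := (ENNReal.ofReal_mul hc.le).symm
  constructor
  · obtain ⟨g, h, hAg, hAh, _, hAfe⟩ := key 1 one_pos
    exact ⟨A g, A h, hAg, hAh, hAfe⟩
  · intro l hl
    have hδ : 0 < l / (2 * c) := by positivity
    obtain ⟨g, h, hAg, hAh, hAhn, hAfe⟩ := key (l / (2 * c)) hδ
    have hcl : c * (l / (2 * c)) = l / 2 := by field_simp
    rw [hcl] at hAhn
    have hAhb : ∀ᵐ t ∂μ, |A h t| ≤ l / 2 := by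
      filter_upwards [ae_le_eLpNormEssSup (f := A h) (μ := μ)] with t ht
      have hle : (‖A h t‖₊ : ℝ≥0∞) ≤ ENNReal.ofReal (l / 2) := by
        calc (‖A h t‖₊ : ℝ≥0∞) ≤ eLpNormEssSup (A h) μ := ht
          _ = eLpNorm (A h) ⊤ μ := eLpNorm_exponent_top.symm
          _ ≤ ENNReal.ofReal (l / 2) := hAhn
      have := (ENNReal.toReal_le_toReal ENNReal.coe_ne_top ENNReal.ofReal_ne_top).mpr hle
      rw [ENNReal.toReal_ofReal (by linarith), ENNReal.coe_toReal, coe_nnnorm,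
        Real.norm_eq_abs] at this
      exact this
    have hsub : {t | l < |A f t|} ≤ᵐ[μ] {t | l / 2 < |A g t|} := by
      filter_upwards [hAhb] with t ht hmem
      have hmem' : l < |A f t| := hmem
      show l / 2 < |A g t|
      have : |A f t| ≤ |A g t| + |A h t| := by
        rw [hAfe]; exact abs_add_le _ _
      linarith
    calc μ {t | l < |A f t|} ≤ μ {t | l / 2 < |A g t|} := measure_mono_ae hsub
      _ ≤ μ {t | l / 2 ≤ ‖A g t‖} := by
          apply measure_mono
          intro t ht
          simp only [Set.mem_setOf_eq, Real.norm_eq_abs] at *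
          linarith
      _ < ⊤ := hAg.measure_norm_ge_lt_top (by positivity)
end

section
/- Let (Ω, μ) be a σ-finite measure space and let A : L¹(μ) + L^∞(μ) → L¹(μ) + L^∞(μ) be a linear Dunford–Schwartz operator: A(L¹) ⊆ L¹ with ‖A f‖₁ ≤ ‖f‖₁, and A(L^∞) ⊆ L^∞ with ‖A f‖_∞ ≤ ‖f‖_∞. Then for every f ∈ L¹ + L^∞ and every s > 0, ∫₀ˢ μ_t(A f) dt ≤ ∫₀ˢ μ_t(f) dt, where μ_t denotes the non-increasing rearrangement. -/
open MeasureTheory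

/-- The non-increasing rearrangement of `f`. -/
noncomputable def rearrangement {Ω : Type*} [MeasurableSpace Ω] (μ : Measure Ω)
    (f : Ω → ℝ) (t : ℝ) : ℝ :=
  sInf {l : ℝ | 0 < l ∧ μ {x | l < |f x|} ≤ ENNReal.ofReal t}

section Aux

open ENNReal Set

variable {Ω : Type*} [MeasurableSpace Ω] {μ : Measure Ω}

/-- The sublevel set used in the definition of `rearrangement`. -/
def Sset (μ : Measure Ω) (f : Ω → ℝ) (t : ℝ) : Set ℝ :=
  {l : ℝ | 0 < l ∧ μ {x | l < |f x|} ≤ ENNReal.ofReal t}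

lemma rearrangement_eq_sInf (f : Ω → ℝ) (t : ℝ) :
    rearrangement μ f t = sInf (Sset μ f t) := rfl

lemma distf_antitone (f : Ω → ℝ) {l l' : ℝ} (h : l ≤ l') :
    μ {x | l' < |f x|} ≤ μ {x | l < |f x|} :=
  measure_mono fun _ hx => lt_of_le_of_lt h hx

lemma distf_le_of_forall_gt (f : Ω → ℝ) {l : ℝ} {r : ℝ≥0∞}
    (h : ∀ l', l < l' → μ {x | l' < |f x|} ≤ r) :
    μ {x | l < |f x|} ≤ r := by
  have hmono : Monotone (fun n : ℕ => {x : Ω | l + 1 / (n + 1 : ℝ) < |f x|}) := by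
    intro m n hmn x hx
    have h1 : (1 : ℝ) / (n + 1) ≤ 1 / (m + 1) := by
      apply one_div_le_one_div_of_le
      · positivity
      · exact_mod_cast Nat.add_le_add_right hmn 1
    simp only [Set.mem_setOf_eq] at hx ⊢
    linarith
  have hsub : {x : Ω | l < |f x|} ⊆ ⋃ n : ℕ, {x : Ω | l + 1 / (n + 1 : ℝ) < |f x|} := by
    intro x hx
    obtain ⟨n, hn⟩ := exists_nat_one_div_lt (K := ℝ) (sub_pos.mpr hx)
    exact Set.mem_iUnion.mpr ⟨n, by simp only [Set.mem_setOf_eq]; linarith⟩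
  calc μ {x | l < |f x|} ≤ μ (⋃ n : ℕ, {x : Ω | l + 1 / (n + 1 : ℝ) < |f x|}) :=
        measure_mono hsub
    _ = ⨆ n : ℕ, μ {x : Ω | l + 1 / (n + 1 : ℝ) < |f x|} :=
        (hmono.directed_le).measure_iUnion
    _ ≤ r := iSup_le fun n => h _ (by
        have h0 : (0:ℝ) < 1 / (n + 1 : ℝ) := by positivity
        linarith)

lemma Sset_upper {f : Ω → ℝ} {t l l' : ℝ} (hl : l ∈ Sset μ f t) (hll' : l ≤ l') :
    l' ∈ Sset μ f t :=
  ⟨lt_of_lt_of_le hl.1 hll', le_trans (distf_antitone f hll') hl.2⟩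

lemma Sset_bddBelow (f : Ω → ℝ) (t : ℝ) : BddBelow (Sset μ f t) :=
  ⟨0, fun _ hl => le_of_lt hl.1⟩

lemma rearrangement_nonneg (f : Ω → ℝ) (t : ℝ) : 0 ≤ rearrangement μ f t :=
  Real.sInf_nonneg fun _ hl => le_of_lt hl.1

lemma Sset_mono {f : Ω → ℝ} {t t' : ℝ} (h : t ≤ t') : Sset μ f t ⊆ Sset μ f t' :=
  fun _ hl => ⟨hl.1, le_trans hl.2 (ENNReal.ofReal_le_ofReal h)⟩

lemma Sset_nonempty {f : Ω → ℝ} (hf : InL1PlusLinf μ f) {t : ℝ} (ht : 0 < t) :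
    (Sset μ f t).Nonempty := by
  obtain ⟨g, h, hg, hh, rfl⟩ := hf
  set B : ℝ := (eLpNorm h ⊤ μ).toReal with hBdef
  have hB : 0 ≤ B := ENNReal.toReal_nonneg
  have hhae : ∀ᵐ x ∂μ, |h x| ≤ B := by
    filter_upwards [ae_le_eLpNormEssSup (f := h) (μ := μ)] with x hx
    have hfin : eLpNormEssSup h μ ≠ ⊤ := by
      rw [← eLpNorm_exponent_top]; exact hh.2.ne
    have := ENNReal.toReal_mono hfin hx
    simpa [hBdef, eLpNorm_exponent_top, Real.norm_eq_abs] using this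
  set L : ℝ≥0∞ := ∫⁻ x, ENNReal.ofReal |g x| ∂μ with hLdef
  have hLfin : L ≠ ⊤ := by
    have : L = ∫⁻ x, ‖g x‖ₑ ∂μ := by
      simp only [hLdef, Real.enorm_eq_ofReal_abs]
    rw [this]
    exact hg.2.ne
  set a : ℝ := max 1 (L.toReal / t) with hadef
  have ha1 : (1:ℝ) ≤ a := le_max_left _ _
  have ha0 : (0:ℝ) < a := lt_of_lt_of_le one_pos ha1
  have hmarkov : μ {x | a < |g x|} ≤ L / ENNReal.ofReal a := by
    have habsm : AEMeasurable (fun x => |g x|) μ := by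
      have := hg.1.norm.aemeasurable
      simpa [Real.norm_eq_abs] using this
    have hmeas : AEMeasurable (fun x => ENNReal.ofReal |g x|) μ :=
      habsm.ennreal_ofReal
    have key := mul_meas_ge_le_lintegral₀ hmeas (ENNReal.ofReal a)
    have hsub : {x | a < |g x|} ⊆ {x | ENNReal.ofReal a ≤ ENNReal.ofReal |g x|} :=
      fun x hx => ENNReal.ofReal_le_ofReal (le_of_lt hx)
    have h1 : μ {x | a < |g x|} ≤ μ {x | ENNReal.ofReal a ≤ ENNReal.ofReal |g x|} :=
      measure_mono hsub
    have h2 : ENNReal.ofReal a * μ {x | a < |g x|} ≤ L :=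
      le_trans (mul_le_mul_right h1 _) key
    rw [ENNReal.le_div_iff_mul_le (Or.inl (ENNReal.ofReal_pos.mpr ha0).ne')
      (Or.inl ENNReal.ofReal_ne_top)]
    rwa [mul_comm]
  have hdiv : L / ENNReal.ofReal a ≤ ENNReal.ofReal t := by
    rw [ENNReal.div_le_iff_le_mul (Or.inl (ENNReal.ofReal_pos.mpr ha0).ne')
      (Or.inl ENNReal.ofReal_ne_top)]
    calc L = ENNReal.ofReal L.toReal := (ENNReal.ofReal_toReal hLfin).symm
      _ ≤ ENNReal.ofReal (t * a) := by
          apply ENNReal.ofReal_le_ofReal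
          have : L.toReal / t ≤ a := le_max_right _ _
          calc L.toReal = t * (L.toReal / t) := by field_simp
            _ ≤ t * a := by nlinarith
      _ = ENNReal.ofReal t * ENNReal.ofReal a := ENNReal.ofReal_mul ht.le
  refine ⟨B + a, by linarith, ?_⟩
  have hsub2 : ∀ᵐ x ∂μ, x ∈ {x | B + a < |(g + h) x|} → x ∈ {x | a < |g x|} := by
    filter_upwards [hhae] with x hx hmem
    simp only [Set.mem_setOf_eq, Pi.add_apply] at hmem ⊢
    by_contra hcon
    push_neg at hcon
    have := abs_add_le (g x) (h x)
    linarith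
  calc μ {x | B + a < |(g + h) x|} ≤ μ {x | a < |g x|} :=
        measure_mono_ae hsub2
    _ ≤ L / ENNReal.ofReal a := hmarkov
    _ ≤ ENNReal.ofReal t := hdiv

lemma rearrangement_mem_bound {f : Ω → ℝ} {t : ℝ} (hne : (Sset μ f t).Nonempty) :
    μ {x | rearrangement μ f t < |f x|} ≤ ENNReal.ofReal t := by
  apply distf_le_of_forall_gt
  intro l' hl'
  obtain ⟨l, hlmem, hll'⟩ := exists_lt_of_csInf_lt hne hl'
  exact (Sset_upper hlmem hll'.le).2

lemma rearrangement_antitoneOn {f : Ω → ℝ} (hf : InL1PlusLinf μ f) :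
    AntitoneOn (rearrangement μ f) (Set.Ioi (0:ℝ)) := by
  intro t ht t' _ htt'
  exact csInf_le_csInf (Sset_bddBelow f t') (Sset_nonempty hf ht) (Sset_mono htt')

lemma le_rearrangement_of_not_mem {f : Ω → ℝ} {t l : ℝ} (hl : 0 < l)
    (hnmem : l ∉ Sset μ f t) (hne : (Sset μ f t).Nonempty) :
    l ≤ rearrangement μ f t := by
  apply le_csInf hne
  intro b hb
  by_contra hcon
  push_neg at hcon
  exact hnmem (Sset_upper hb hcon.le)

lemma rearrangement_le_of_mem {f : Ω → ℝ} {t l : ℝ} (hl : l ∈ Sset μ f t) :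
    rearrangement μ f t ≤ l :=
  csInf_le (Sset_bddBelow f t) hl

lemma aemeasurable_abs' {g : Ω → ℝ} (hg : AEStronglyMeasurable g μ) :
    AEMeasurable (fun x => |g x|) μ := by
  have := hg.norm.aemeasurable
  simpa [Real.norm_eq_abs] using this

lemma aesm_of_inL1PlusLinf {f : Ω → ℝ} (hf : InL1PlusLinf μ f) :
    AEStronglyMeasurable f μ := by
  obtain ⟨g, h, hg, hh, rfl⟩ := hf
  exact hg.1.add hh.1

/-- Key upper bound: the K-functional inequality `∫₀ˢ μ_t(g+h) ≤ ‖g‖₁ + s ‖h‖_∞`. -/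
lemma lintegral_rearrangement_le (g h : Ω → ℝ) (hg : Integrable g μ) (hh : MemLp h ⊤ μ)
    {s : ℝ} (hs : 0 < s) :
    ∫⁻ t in Set.Ioc (0:ℝ) s, ENNReal.ofReal (rearrangement μ (g + h) t) ≤
      eLpNorm g 1 μ + ENNReal.ofReal s * eLpNorm h ⊤ μ := by
  set B : ℝ := (eLpNorm h ⊤ μ).toReal with hBdef
  have hB : 0 ≤ B := ENNReal.toReal_nonneg
  have hhae : ∀ᵐ x ∂μ, |h x| ≤ B := by
    filter_upwards [ae_le_eLpNormEssSup (f := h) (μ := μ)] with x hx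
    have hfin : eLpNormEssSup h μ ≠ ⊤ := by
      rw [← eLpNorm_exponent_top]; exact hh.2.ne
    have := ENNReal.toReal_mono hfin hx
    simpa [hBdef, eLpNorm_exponent_top, Real.norm_eq_abs] using this
  have hnullh : μ {x | B < |h x|} = 0 := by
    have := hhae
    rw [ae_iff] at this
    simpa [not_le] using this
  have hgL1 : InL1PlusLinf μ g := ⟨g, 0, hg, MemLp.zero, by simp⟩
  -- pointwise bound: rearrangement (g+h) t ≤ rearrangement g t + B for t > 0
  have hpt : ∀ t ∈ Set.Ioc (0:ℝ) s,
      rearrangement μ (g + h) t ≤ rearrangement μ g t + B := by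
    intro t ht
    have hne : (Sset μ g t).Nonempty := Sset_nonempty hgL1 ht.1
    have hstep : ∀ l ∈ Sset μ g t, l + B ∈ Sset μ (g + h) t := by
      intro l hl
      refine ⟨by linarith [hl.1], ?_⟩
      have hsub : {x | l + B < |(g + h) x|} ⊆ {x | l < |g x|} ∪ {x | B < |h x|} := by
        intro x hx
        simp only [Set.mem_setOf_eq, Pi.add_apply, Set.mem_union] at hx ⊢
        by_contra hcon
        push_neg at hcon
        have := abs_add_le (g x) (h x)
        linarith [hcon.1, hcon.2]
      calc μ {x | l + B < |(g + h) x|} ≤ μ ({x | l < |g x|} ∪ {x | B < |h x|}) :=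
            measure_mono hsub
        _ ≤ μ {x | l < |g x|} + μ {x | B < |h x|} := measure_union_le _ _
        _ = μ {x | l < |g x|} := by rw [hnullh, add_zero]
        _ ≤ ENNReal.ofReal t := hl.2
    have hlb : ∀ l ∈ Sset μ g t, rearrangement μ (g + h) t - B ≤ l := by
      intro l hl
      have := rearrangement_le_of_mem (hstep l hl)
      linarith
    have h2 : rearrangement μ (g + h) t - B ≤ rearrangement μ g t := le_csInf hne hlb
    linarith
  -- measurability of rearrangement of g on Ioc 0 s
  have hanti : AntitoneOn (rearrangement μ g) (Set.Ioc (0:ℝ) s) :=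
    (rearrangement_antitoneOn hgL1).mono Set.Ioc_subset_Ioi_self
  have hmeasg : AEMeasurable (rearrangement μ g) (volume.restrict (Set.Ioc (0:ℝ) s)) :=
    aemeasurable_restrict_of_antitoneOn measurableSet_Ioc hanti
  calc ∫⁻ t in Set.Ioc (0:ℝ) s, ENNReal.ofReal (rearrangement μ (g + h) t)
      ≤ ∫⁻ t in Set.Ioc (0:ℝ) s,
          (ENNReal.ofReal (rearrangement μ g t) + ENNReal.ofReal B) := by
        apply lintegral_mono_ae
        filter_upwards [ae_restrict_mem measurableSet_Ioc] with t ht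
        rw [← ENNReal.ofReal_add (rearrangement_nonneg g t) hB]
        exact ENNReal.ofReal_le_ofReal (hpt t ht)
    _ = (∫⁻ t in Set.Ioc (0:ℝ) s, ENNReal.ofReal (rearrangement μ g t)) +
          ENNReal.ofReal B * volume (Set.Ioc (0:ℝ) s) := by
        rw [lintegral_add_right _ measurable_const, lintegral_const,
          Measure.restrict_apply MeasurableSet.univ, Set.univ_inter]
    _ ≤ eLpNorm g 1 μ + ENNReal.ofReal s * eLpNorm h ⊤ μ := by
        apply add_le_add
        · -- main L¹ estimate
          calc ∫⁻ t in Set.Ioc (0:ℝ) s, ENNReal.ofReal (rearrangement μ g t)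
              ≤ ∫⁻ t in Set.Ioi (0:ℝ), ENNReal.ofReal (rearrangement μ g t) :=
                lintegral_mono_set Set.Ioc_subset_Ioi_self
            _ = ∫⁻ u in Set.Ioi (0:ℝ),
                  (volume.restrict (Set.Ioi (0:ℝ))) {t | u < rearrangement μ g t} := by
                apply lintegral_eq_lintegral_meas_lt
                · exact Filter.Eventually.of_forall fun t => rearrangement_nonneg g t
                · exact aemeasurable_restrict_of_antitoneOn measurableSet_Ioi
                    (rearrangement_antitoneOn hgL1)
            _ ≤ ∫⁻ u in Set.Ioi (0:ℝ), μ {x | u < |g x|} := by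
                apply lintegral_mono_ae
                filter_upwards [ae_restrict_mem measurableSet_Ioi] with u hu
                rw [Measure.restrict_apply' measurableSet_Ioi]
                set D : ℝ≥0∞ := μ {x | u < |g x|} with hDdef
                rcases eq_or_ne D ⊤ with hD | hD
                · rw [hD]; exact le_top
                have hsub : {t | u < rearrangement μ g t} ∩ Set.Ioi 0 ⊆
                    Set.Ioc (0:ℝ) D.toReal := by
                  rintro t ⟨htu, htpos⟩
                  simp only [Set.mem_setOf_eq] at htu
                  refine ⟨htpos, ?_⟩
                  by_contra hcon
                  push_neg at hcon
                  have humem : u ∈ Sset μ g t := by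
                    refine ⟨hu, ?_⟩
                    calc μ {x | u < |g x|} = ENNReal.ofReal D.toReal :=
                          (ENNReal.ofReal_toReal hD).symm
                      _ ≤ ENNReal.ofReal t := ENNReal.ofReal_le_ofReal hcon.le
                  exact absurd (rearrangement_le_of_mem humem) (not_le.mpr htu)
                calc volume ({t | u < rearrangement μ g t} ∩ Set.Ioi 0)
                    ≤ volume (Set.Ioc (0:ℝ) D.toReal) := measure_mono hsub
                  _ = ENNReal.ofReal D.toReal := by rw [Real.volume_Ioc, sub_zero]
                  _ ≤ D := ENNReal.ofReal_toReal_le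
            _ = ∫⁻ x, ENNReal.ofReal |g x| ∂μ :=
                (lintegral_eq_lintegral_meas_lt μ
                  (Filter.Eventually.of_forall fun x => abs_nonneg (g x))
                  (aemeasurable_abs' hg.1)).symm
            _ = eLpNorm g 1 μ := by
                rw [eLpNorm_one_eq_lintegral_enorm]
                simp only [Real.enorm_eq_ofReal_abs]
        · rw [Real.volume_Ioc, sub_zero, mul_comm]
          exact mul_le_mul_right (by rw [hBdef]; exact ENNReal.ofReal_toReal_le) _

/-- Key lower bound: near-optimal decomposition attaining the K-functional. -/
lemma exists_decomposition_le_lintegral (f : Ω → ℝ) (hf : InL1PlusLinf μ f)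
    {s : ℝ} (hs : 0 < s) :
    ∃ g h : Ω → ℝ, f = g + h ∧ AEStronglyMeasurable g μ ∧ MemLp h ⊤ μ ∧
      eLpNorm g 1 μ + ENNReal.ofReal s * eLpNorm h ⊤ μ ≤
        ∫⁻ t in Set.Ioc (0:ℝ) s, ENNReal.ofReal (rearrangement μ f t) := by
  set c : ℝ := rearrangement μ f s with hcdef
  have hc : 0 ≤ c := rearrangement_nonneg f s
  have hfm : AEStronglyMeasurable f μ := aesm_of_inL1PlusLinf hf
  set h : Ω → ℝ := fun x => max (min (f x) c) (-c) with hhdef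
  set g : Ω → ℝ := fun x => f x - h x with hgdef
  have hfgh : f = g + h := by funext x; simp [hgdef]
  have hhm : AEStronglyMeasurable h μ :=
    ((hfm.aemeasurable.min aemeasurable_const).max aemeasurable_const).aestronglyMeasurable
  have hgm : AEStronglyMeasurable g μ := hfm.sub hhm
  have hhbd : ∀ x, |h x| ≤ c := by
    intro x
    rw [abs_le]
    constructor
    · exact le_max_right _ _
    · exact max_le (min_le_right _ _) (by linarith)
  have hhmem : MemLp h ⊤ μ :=
    memLp_top_of_bound hhm c (Filter.Eventually.of_forall fun x => by
      rw [Real.norm_eq_abs]; exact hhbd x)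
  have hhnorm : eLpNorm h ⊤ μ ≤ ENNReal.ofReal c := by
    rw [eLpNorm_exponent_top]
    exact eLpNormEssSup_le_of_ae_bound (Filter.Eventually.of_forall fun x => by
      rw [Real.norm_eq_abs]; exact hhbd x)
  have habs : ∀ x, |g x| = max (|f x| - c) 0 := by
    intro x
    rcases le_total c (f x) with h1 | h1
    · have : h x = c := by
        rw [hhdef]
        simp only [min_eq_right h1, max_eq_left (by linarith : -c ≤ c)]
      rw [hgdef]
      simp only [this]
      rw [abs_of_nonneg (by linarith), abs_of_nonneg (by linarith),
        max_eq_left (by linarith)]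
    · rcases le_total (-c) (f x) with h2 | h2
      · have : h x = f x := by
          rw [hhdef]
          simp only [min_eq_left h1, max_eq_left h2]
        rw [hgdef]
        simp only [this, sub_self, abs_zero]
        rw [max_eq_right]
        rw [sub_nonpos]
        exact abs_le.mpr ⟨h2, h1⟩
      · have : h x = -c := by
          rw [hhdef]
          simp only [min_eq_left h1, max_eq_right h2]
        rw [hgdef]
        simp only [this, sub_neg_eq_add]
        rw [abs_of_nonpos (by linarith), abs_of_nonpos (by linarith),
          max_eq_left (by linarith)]
        ring
  -- antitone / measurability facts
  have hanti : AntitoneOn (rearrangement μ f) (Set.Ioc (0:ℝ) s) :=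
    (rearrangement_antitoneOn hf).mono Set.Ioc_subset_Ioi_self
  have hmeasf : AEMeasurable (rearrangement μ f) (volume.restrict (Set.Ioc (0:ℝ) s)) :=
    aemeasurable_restrict_of_antitoneOn measurableSet_Ioc hanti
  have hge_c : ∀ t ∈ Set.Ioc (0:ℝ) s, c ≤ rearrangement μ f t := by
    intro t ht
    exact hanti (Set.mem_Ioc.mpr ⟨ht.1, ht.2⟩) (Set.mem_Ioc.mpr ⟨hs, le_refl s⟩) ht.2
  -- distribution bound at level c
  have hSsne : (Sset μ f s).Nonempty := Sset_nonempty hf hs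
  have hdc : μ {x | c < |f x|} ≤ ENNReal.ofReal s := rearrangement_mem_bound hSsne
  -- the L¹ norm of g via layer cake
  have hg1 : eLpNorm g 1 μ = ∫⁻ u in Set.Ioi (0:ℝ), μ {x | c + u < |f x|} := by
    rw [eLpNorm_one_eq_lintegral_enorm]
    have step1 : ∫⁻ x, ‖g x‖ₑ ∂μ = ∫⁻ x, ENNReal.ofReal (max (|f x| - c) 0) ∂μ := by
      apply lintegral_congr
      intro x
      rw [Real.enorm_eq_ofReal_abs, habs x]
    rw [step1]
    have hmax_meas : AEMeasurable (fun x => max (|f x| - c) 0) μ :=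
      (((aemeasurable_abs' hfm).sub aemeasurable_const).max aemeasurable_const)
    rw [lintegral_eq_lintegral_meas_lt (f := fun x => max (|f x| - c) 0) μ
      (Filter.Eventually.of_forall fun x => le_max_right _ _) hmax_meas]
    apply setLIntegral_congr_fun measurableSet_Ioi
    intro u hu
    beta_reduce
    congr 1
    ext x
    simp only [Set.mem_setOf_eq, lt_max_iff]
    constructor
    · rintro (h1 | h1)
      · linarith
      · exact absurd h1 (not_lt.mpr (le_of_lt hu))
    · intro h1; left; linarith
  -- key distribution estimate
  have hkey : ∀ u ∈ Set.Ioi (0:ℝ), μ {x | c + u < |f x|} ≤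
      (volume.restrict (Set.Ioc (0:ℝ) s)) {t | u < rearrangement μ f t - c} := by
    intro u hu
    rw [Measure.restrict_apply' measurableSet_Ioc]
    apply distf_le_of_forall_gt
    intro l' hl'
    set u' : ℝ := l' - c with hu'def
    have hu'u : u < u' := by rw [hu'def]; linarith
    have hu'pos : 0 < u' := lt_trans hu hu'u
    have hcl' : l' = c + u' := by rw [hu'def]; ring
    set D' : ℝ≥0∞ := μ {x | l' < |f x|} with hD'def
    have hD'le : D' ≤ ENNReal.ofReal s := by
      refine le_trans ?_ hdc
      exact distf_antitone f (by linarith)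
    have hD'fin : D' ≠ ⊤ := by
      intro hcon
      rw [hcon] at hD'le
      exact absurd hD'le (by simp)
    have hrle : D'.toReal ≤ s := by
      have := ENNReal.toReal_mono ENNReal.ofReal_ne_top hD'le
      rwa [ENNReal.toReal_ofReal hs.le] at this
    have hsub : Set.Ioo (0:ℝ) D'.toReal ⊆
        {t | u < rearrangement μ f t - c} ∩ Set.Ioc (0:ℝ) s := by
      rintro t ⟨htpos, htlt⟩
      have hot : ENNReal.ofReal t < D' := by
        rw [← ENNReal.ofReal_toReal hD'fin]
        exact ENNReal.ofReal_lt_ofReal_iff_of_nonneg htpos.le |>.mpr htlt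
      have hnmem : l' ∉ Sset μ f t := by
        rintro ⟨_, hmem⟩
        exact absurd hmem (not_le.mpr hot)
      have hl'pos : 0 < l' := by rw [hcl']; linarith
      have htne : (Sset μ f t).Nonempty := Sset_nonempty hf htpos
      have := le_rearrangement_of_not_mem hl'pos hnmem htne
      constructor
      · simp only [Set.mem_setOf_eq]
        rw [hcl'] at this
        linarith
      · exact ⟨htpos, le_trans htlt.le hrle⟩
    calc μ {x | l' < |f x|} = ENNReal.ofReal D'.toReal :=
          (ENNReal.ofReal_toReal hD'fin).symm
      _ = volume (Set.Ioo (0:ℝ) D'.toReal) := by rw [Real.volume_Ioo, sub_zero]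
      _ ≤ volume ({t | u < rearrangement μ f t - c} ∩ Set.Ioc (0:ℝ) s) :=
          measure_mono hsub
  -- put it together
  have hψnn : 0 ≤ᵐ[volume.restrict (Set.Ioc (0:ℝ) s)]
      fun t => rearrangement μ f t - c := by
    filter_upwards [ae_restrict_mem measurableSet_Ioc] with t ht
    have := hge_c t ht
    simp only [Pi.zero_apply]
    linarith
  have hψm : AEMeasurable (fun t => rearrangement μ f t - c)
      (volume.restrict (Set.Ioc (0:ℝ) s)) := hmeasf.sub aemeasurable_const
  have hlayer : ∫⁻ t in Set.Ioc (0:ℝ) s, ENNReal.ofReal (rearrangement μ f t - c) =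
      ∫⁻ u in Set.Ioi (0:ℝ),
        (volume.restrict (Set.Ioc (0:ℝ) s)) {t | u < rearrangement μ f t - c} :=
    lintegral_eq_lintegral_meas_lt _ hψnn hψm
  have hg1le : eLpNorm g 1 μ ≤
      ∫⁻ t in Set.Ioc (0:ℝ) s, ENNReal.ofReal (rearrangement μ f t - c) := by
    rw [hg1, hlayer]
    apply lintegral_mono_ae
    filter_upwards [ae_restrict_mem measurableSet_Ioi] with u hu
    exact hkey u hu
  refine ⟨g, h, hfgh, hgm, hhmem, ?_⟩
  have hfinal : ∫⁻ t in Set.Ioc (0:ℝ) s, ENNReal.ofReal (rearrangement μ f t) =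
      (∫⁻ t in Set.Ioc (0:ℝ) s, ENNReal.ofReal (rearrangement μ f t - c)) +
        ENNReal.ofReal c * ENNReal.ofReal s := by
    have : ∀ᵐ t ∂(volume.restrict (Set.Ioc (0:ℝ) s)),
        ENNReal.ofReal (rearrangement μ f t) =
          ENNReal.ofReal (rearrangement μ f t - c) + ENNReal.ofReal c := by
      filter_upwards [ae_restrict_mem measurableSet_Ioc] with t ht
      rw [← ENNReal.ofReal_add (by linarith [hge_c t ht]) hc]
      congr 1
      ring
    rw [lintegral_congr_ae this, lintegral_add_right _ measurable_const, lintegral_const,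
      Measure.restrict_apply MeasurableSet.univ, Set.univ_inter, Real.volume_Ioc, sub_zero]
  rw [hfinal]
  apply add_le_add hg1le
  calc ENNReal.ofReal s * eLpNorm h ⊤ μ ≤ ENNReal.ofReal s * ENNReal.ofReal c :=
        mul_le_mul_right hhnorm _
    _ = ENNReal.ofReal c * ENNReal.ofReal s := mul_comm _ _

end Aux

/-- A Dunford–Schwartz operator is submajorization-decreasing: `A f ≺≺ f`. -/
theorem dunford_schwartz_submajorization
    {Ω : Type*} [MeasurableSpace Ω] (μ : Measure Ω) [SigmaFinite μ]
    (A : (Ω → ℝ) → (Ω → ℝ))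
    (hadd : ∀ f g : Ω → ℝ, InL1PlusLinf μ f → InL1PlusLinf μ g →
      A (f + g) = A f + A g)
    (hsmul : ∀ (c : ℝ) (f : Ω → ℝ), InL1PlusLinf μ f → A (c • f) = c • A f)
    (hL1 : ∀ g : Ω → ℝ, Integrable g μ → Integrable (A g) μ ∧
      eLpNorm (A g) 1 μ ≤ eLpNorm g 1 μ)
    (hLinf : ∀ h : Ω → ℝ, MemLp h ⊤ μ → MemLp (A h) ⊤ μ ∧
      eLpNorm (A h) ⊤ μ ≤ eLpNorm h ⊤ μ)
    (f : Ω → ℝ) (hf : InL1PlusLinf μ f) (s : ℝ) (hs : 0 < s) :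
    ∫ t in Set.Ioc (0 : ℝ) s, rearrangement μ (A f) t ≤
      ∫ t in Set.Ioc (0 : ℝ) s, rearrangement μ f t := by
  obtain ⟨g₀, h₀, hg₀, hh₀, hfd₀⟩ := hf
  have hf' : InL1PlusLinf μ f := ⟨g₀, h₀, hg₀, hh₀, hfd₀⟩
  -- finiteness of the rearrangement integral of f
  have hIf_bound : ∫⁻ t in Set.Ioc (0:ℝ) s, ENNReal.ofReal (rearrangement μ f t) ≤
      eLpNorm g₀ 1 μ + ENNReal.ofReal s * eLpNorm h₀ ⊤ μ := by
    rw [hfd₀]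
    exact lintegral_rearrangement_le g₀ h₀ hg₀ hh₀ hs
  have hIf_ne : ∫⁻ t in Set.Ioc (0:ℝ) s, ENNReal.ofReal (rearrangement μ f t) ≠ ⊤ := by
    apply ne_top_of_le_ne_top _ hIf_bound
    exact ENNReal.add_ne_top.mpr ⟨(memLp_one_iff_integrable.mpr hg₀).2.ne,
      ENNReal.mul_ne_top ENNReal.ofReal_ne_top hh₀.2.ne⟩
  -- optimal decomposition
  obtain ⟨g, h, hfd, hgm, hhmem, hbound⟩ := exists_decomposition_le_lintegral f hf' hs
  have hg_fin : eLpNorm g 1 μ < ⊤ :=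
    lt_of_le_of_lt (le_trans (le_add_right le_rfl) hbound) (lt_top_iff_ne_top.mpr hIf_ne)
  have hgInt : Integrable g μ := memLp_one_iff_integrable.mp ⟨hgm, hg_fin⟩
  have hgL : InL1PlusLinf μ g := ⟨g, 0, hgInt, MemLp.zero, by simp⟩
  have hhL : InL1PlusLinf μ h := ⟨0, h, integrable_zero _ _ _, hhmem, by simp⟩
  have hAf : A f = A g + A h := by rw [hfd]; exact hadd g h hgL hhL
  obtain ⟨hAg_int, hAg_norm⟩ := hL1 g hgInt
  obtain ⟨hAh_mem, hAh_norm⟩ := hLinf h hhmem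
  -- chain of inequalities at the lintegral level
  have hchain : ∫⁻ t in Set.Ioc (0:ℝ) s, ENNReal.ofReal (rearrangement μ (A f) t) ≤
      ∫⁻ t in Set.Ioc (0:ℝ) s, ENNReal.ofReal (rearrangement μ f t) := by
    calc ∫⁻ t in Set.Ioc (0:ℝ) s, ENNReal.ofReal (rearrangement μ (A f) t)
        = ∫⁻ t in Set.Ioc (0:ℝ) s, ENNReal.ofReal (rearrangement μ (A g + A h) t) := by
          rw [hAf]
      _ ≤ eLpNorm (A g) 1 μ + ENNReal.ofReal s * eLpNorm (A h) ⊤ μ :=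
          lintegral_rearrangement_le (A g) (A h) hAg_int hAh_mem hs
      _ ≤ eLpNorm g 1 μ + ENNReal.ofReal s * eLpNorm h ⊤ μ :=
          add_le_add hAg_norm (mul_le_mul_right hAh_norm _)
      _ ≤ ∫⁻ t in Set.Ioc (0:ℝ) s, ENNReal.ofReal (rearrangement μ f t) := hbound
  have hAfL : InL1PlusLinf μ (A f) := ⟨A g, A h, hAg_int, hAh_mem, hAf⟩
  -- convert to Bochner integrals
  have conv : ∀ F : Ω → ℝ, InL1PlusLinf μ F →
      ∫ t in Set.Ioc (0:ℝ) s, rearrangement μ F t =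
        (∫⁻ t in Set.Ioc (0:ℝ) s, ENNReal.ofReal (rearrangement μ F t)).toReal := by
    intro F hF
    apply integral_eq_lintegral_of_nonneg_ae
    · exact Filter.Eventually.of_forall fun t => rearrangement_nonneg F t
    · exact (aemeasurable_restrict_of_antitoneOn measurableSet_Ioc
        ((rearrangement_antitoneOn hF).mono Set.Ioc_subset_Ioi_self)).aestronglyMeasurable
  rw [conv (A f) hAfL, conv f hf']
  exact ENNReal.toReal_mono hIf_ne hchain
end

section
/- For f ∈ L¹(μ) + L^∞(μ) on a measure space (Ω, μ) and s > 0, one has ∫₀ˢ μ_t(f) dt = inf{ ‖g‖₁ + s‖h‖_∞ : f = g + h, g ∈ L¹(μ), h ∈ L^∞(μ) }, where μ_t(f) is the non-increasing rearrangement of f. -/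
open MeasureTheory
open scoped ENNReal NNReal

section Aux

open Set

variable {Ω : Type*} [MeasurableSpace Ω] {μ : Measure Ω} {f : Ω → ℝ}

/-- Right continuity of the distribution function (as an inequality). -/
lemma distrib_right_cont (μ : Measure Ω) (f : Ω → ℝ) {l : ℝ} {c : ℝ≥0∞}
    (h : ∀ l', l < l' → μ {x | l' < |f x|} ≤ c) : μ {x | l < |f x|} ≤ c := by
  have hset : {x | l < |f x|} = ⋃ n : ℕ, {x | l + 1/(n+1) < |f x|} := by
    ext x
    simp only [mem_setOf_eq, mem_iUnion]
    constructor
    · intro hx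
      obtain ⟨n, hn⟩ := exists_nat_one_div_lt (sub_pos.mpr hx)
      exact ⟨n, by linarith⟩
    · rintro ⟨n, hn⟩
      have : (0:ℝ) < 1/(n+1) := by positivity
      linarith
  rw [hset]
  have hmono : Monotone (fun n : ℕ => {x | l + 1/(n+1) < |f x|}) := by
    intro m n hmn x hx
    simp only [mem_setOf_eq] at hx ⊢
    have h1 : (1:ℝ)/(n+1) ≤ 1/(m+1) := by
      apply one_div_le_one_div_of_le (by positivity)
      have := (Nat.cast_le (α := ℝ)).mpr hmn
      push_cast at *; linarith
    linarith
  rw [hmono.directed_le.measure_iUnion]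
  refine iSup_le fun n => h _ ?_
  have : (0:ℝ) < 1/(n+1) := by positivity
  linarith

/-- Layer cake for the L¹ norm. -/
lemma lintegral_nnnorm_eq_layercake (μ : Measure Ω) {g : Ω → ℝ}
    (hg : AEMeasurable g μ) :
    ∫⁻ x, ‖g x‖₊ ∂μ = ∫⁻ l in Ioi (0:ℝ), μ {x | l < |g x|} := by
  have h1 : ∀ x, ((‖g x‖₊ : ℝ≥0∞)) = ENNReal.ofReal (|g x|) := by
    intro x
    rw [← Real.norm_eq_abs, ofReal_norm, enorm_eq_nnnorm]
  simp_rw [h1]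
  exact lintegral_eq_lintegral_meas_lt μ (Filter.Eventually.of_forall fun x => abs_nonneg _)
    (_root_.measurable_abs.comp_aemeasurable hg)

end Aux

/-- K-functional characterization: for `f ∈ L¹ + L^∞` and `s > 0`,
`∫₀ˢ μ_t(f) dt = inf { ‖g‖₁ + s‖h‖_∞ : f = g + h, g ∈ L¹, h ∈ L^∞ }`. -/
theorem rearrangement_integral_eq_K_functional
    {Ω : Type*} [MeasurableSpace Ω] (μ : Measure Ω)
    (f : Ω → ℝ) (hmeas : Measurable f)
    (hf : ∃ g h : Ω → ℝ, Integrable g μ ∧ MemLp h ⊤ μ ∧ f = g + h)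
    (s : ℝ) (hs : 0 < s) :
    ∫ t in Set.Ioc (0 : ℝ) s, rearrangement μ f t =
      sInf {r : ℝ | ∃ g h : Ω → ℝ, Integrable g μ ∧ MemLp h ⊤ μ ∧ f = g + h ∧
        r = (eLpNorm g 1 μ).toReal + s * (eLpNorm h ⊤ μ).toReal} := by
  classical
  obtain ⟨g₀, h₀, hg₀, hh₀, hfgh₀⟩ := hf
  set Kset := {r : ℝ | ∃ g h : Ω → ℝ, Integrable g μ ∧ MemLp h ⊤ μ ∧ f = g + h ∧
        r = (eLpNorm g 1 μ).toReal + s * (eLpNorm h ⊤ μ).toReal} with hKset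
  set D : ℝ → ℝ≥0∞ := fun l => μ {x | l < |f x|} with hD
  have hDanti : Antitone D := by
    intro a b hab
    exact measure_mono fun x hx => lt_of_le_of_lt hab hx
  have hDmeas : Measurable D := hDanti.measurable
  set R : ℝ → ℝ := rearrangement μ f with hR
  have hRnonneg : ∀ t, 0 ≤ R t := fun t => Real.sInf_nonneg (fun l hl => le_of_lt hl.1)
  -- a.e. bound for L^∞ parts
  have hbound : ∀ (h : Ω → ℝ), MemLp h ⊤ μ →
      ∀ᵐ x ∂μ, |h x| ≤ (eLpNorm h ⊤ μ).toReal := by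
    intro h hh
    filter_upwards [ae_le_eLpNormEssSup (f := h) (μ := μ)] with x hx
    have hne : eLpNormEssSup h μ ≠ ⊤ := by
      rw [← eLpNorm_exponent_top]; exact hh.2.ne
    have h2 := ENNReal.toReal_mono hne hx
    rw [toReal_enorm, Real.norm_eq_abs, ← eLpNorm_exponent_top] at h2
    exact h2
  -- comparison of distribution functions for a decomposition
  have hsub : ∀ (g h : Ω → ℝ), f = g + h → MemLp h ⊤ μ →
      ∀ l : ℝ, D (l + (eLpNorm h ⊤ μ).toReal) ≤ μ {x | l < |g x|} := by
    intro g h hfgh hh l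
    apply measure_mono_ae
    filter_upwards [hbound h hh] with x hx hlx
    have hlx' : l + (eLpNorm h ⊤ μ).toReal < |f x| := hlx
    show l < |g x|
    have hfx : f x = g x + h x := by rw [hfgh]; rfl
    have : |f x| ≤ |g x| + (eLpNorm h ⊤ μ).toReal := by
      calc |f x| = |g x + h x| := by rw [hfx]
        _ ≤ |g x| + |h x| := abs_add_le _ _
        _ ≤ |g x| + (eLpNorm h ⊤ μ).toReal := by linarith
    linarith
  -- nonemptiness of the defining sets of the rearrangement
  have hSne : ∀ t : ℝ, 0 < t → ∃ l : ℝ, 0 < l ∧ D l ≤ ENNReal.ofReal t := by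
    intro t ht
    set I := ∫⁻ x, ‖g₀ x‖₊ ∂μ with hI
    have hIfin : I ≠ ⊤ := hg₀.2.ne
    set a : ℝ := I.toReal / t + 1 with ha
    have hapos : 0 < a := by positivity
    set c₀ := (eLpNorm h₀ ⊤ μ).toReal with hc₀
    have hc₀nonneg : 0 ≤ c₀ := ENNReal.toReal_nonneg
    refine ⟨a + c₀, by positivity, ?_⟩
    calc D (a + c₀) ≤ μ {x | a < |g₀ x|} := hsub g₀ h₀ hfgh₀ hh₀ a
      _ ≤ μ {x | ENNReal.ofReal a ≤ (‖g₀ x‖₊ : ℝ≥0∞)} := by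
          apply measure_mono
          intro x hx
          have hx' : a < |g₀ x| := hx
          show ENNReal.ofReal a ≤ (‖g₀ x‖₊ : ℝ≥0∞)
          rw [← enorm_eq_nnnorm, ← ofReal_norm, Real.norm_eq_abs]
          exact ENNReal.ofReal_le_ofReal (le_of_lt hx')
      _ ≤ I / ENNReal.ofReal a := by
          exact meas_ge_le_lintegral_div hg₀.aestronglyMeasurable.enorm
            (ENNReal.ofReal_pos.mpr hapos).ne' ENNReal.ofReal_ne_top
      _ ≤ ENNReal.ofReal t := by
          rw [ENNReal.div_le_iff (ENNReal.ofReal_pos.mpr hapos).ne' ENNReal.ofReal_ne_top]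
          rw [← ENNReal.ofReal_mul (le_of_lt ht)]
          have hta : t * a = I.toReal + t := by
            rw [ha]
            field_simp
          rw [hta]
          calc I = ENNReal.ofReal I.toReal := (ENNReal.ofReal_toReal hIfin).symm
            _ ≤ ENNReal.ofReal (I.toReal + t) := ENNReal.ofReal_le_ofReal (by linarith)
  -- key equivalence
  have hlt : ∀ l : ℝ, 0 < l → ∀ t : ℝ, 0 < t →
      (l < R t ↔ ENNReal.ofReal t < D l) := by
    intro l hl t ht
    constructor
    · intro h
      by_contra hc
      push_neg at hc
      have : R t ≤ l := csInf_le ⟨0, fun m hm => le_of_lt hm.1⟩ ⟨hl, hc⟩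
      linarith
    · intro h
      by_contra hc
      push_neg at hc
      have hkey : D l ≤ ENNReal.ofReal t := by
        apply distrib_right_cont μ f
        intro l' hl'
        obtain ⟨m, hm, hml'⟩ := exists_lt_of_csInf_lt
          (by obtain ⟨l₀, h1, h2⟩ := hSne t ht; exact ⟨l₀, h1, h2⟩) (lt_of_le_of_lt hc hl')
        exact le_trans (hDanti (le_of_lt hml')) hm.2
      exact absurd h (not_lt.mpr hkey)
  -- superlevel sets of R intersected with Ioi 0 are measurable
  have hRmeasset : ∀ l : ℝ, MeasurableSet ({t : ℝ | l < R t} ∩ Set.Ioi 0) := by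
    have hpos : ∀ l : ℝ, 0 < l → {t : ℝ | l < R t} ∩ Set.Ioi 0
        = (fun t => ENNReal.ofReal t) ⁻¹' Set.Iio (D l) ∩ Set.Ioi 0 := by
      intro l hl
      ext t
      simp only [Set.mem_inter_iff, Set.mem_setOf_eq, Set.mem_preimage, Set.mem_Iio,
        Set.mem_Ioi]
      constructor
      · rintro ⟨h1, h2⟩; exact ⟨(hlt l hl t h2).1 h1, h2⟩
      · rintro ⟨h1, h2⟩; exact ⟨(hlt l hl t h2).2 h1, h2⟩
    have hposmeas : ∀ l : ℝ, 0 < l → MeasurableSet ({t : ℝ | l < R t} ∩ Set.Ioi 0) := by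
      intro l hl
      rw [hpos l hl]
      exact (ENNReal.measurable_ofReal (measurableSet_Iio (a := D l))).inter measurableSet_Ioi
    intro l
    rcases lt_trichotomy l 0 with hl | hl | hl
    · have : {t : ℝ | l < R t} ∩ Set.Ioi 0 = Set.Ioi 0 := by
        apply Set.inter_eq_right.mpr
        intro t _
        exact lt_of_lt_of_le hl (hRnonneg t)
      rw [this]; exact measurableSet_Ioi
    · have : {t : ℝ | l < R t} ∩ Set.Ioi 0
          = ⋃ n : ℕ, ({t : ℝ | 1/(n+1) < R t} ∩ Set.Ioi 0) := by
        subst hl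
        ext t
        simp only [Set.mem_inter_iff, Set.mem_setOf_eq, Set.mem_iUnion, Set.mem_Ioi]
        constructor
        · rintro ⟨h1, h2⟩
          obtain ⟨n, hn⟩ := exists_nat_one_div_lt (sub_pos.mpr h1)
          rw [sub_zero] at hn
          exact ⟨n, ⟨hn, h2⟩⟩
        · rintro ⟨n, hn, h2⟩
          have : (0:ℝ) < 1/(n+1) := by positivity
          exact ⟨by linarith, h2⟩
      rw [this]
      exact MeasurableSet.iUnion fun n => hposmeas _ (by positivity)
    · exact hposmeas l hl
  -- a.e. measurability of R on (0, s]
  have hRaemeas : AEMeasurable R (volume.restrict (Set.Ioc (0:ℝ) s)) := by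
    refine ⟨(Set.Ioi 0).indicator R, ?_, ?_⟩
    · apply measurable_of_Ioi
      intro l
      rcases lt_or_ge l 0 with hl | hl
      · have : (Set.Ioi 0).indicator R ⁻¹' Set.Ioi l = Set.univ := by
          ext t
          simp only [Set.mem_preimage, Set.mem_Ioi, Set.mem_univ, iff_true]
          by_cases ht : t ∈ Set.Ioi (0:ℝ)
          · rw [Set.indicator_of_mem ht]; exact lt_of_lt_of_le hl (hRnonneg t)
          · rw [Set.indicator_of_notMem ht]; exact hl
        rw [this]; exact MeasurableSet.univ
      · have : (Set.Ioi 0).indicator R ⁻¹' Set.Ioi l = {t : ℝ | l < R t} ∩ Set.Ioi 0 := by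
          ext t
          simp only [Set.mem_preimage, Set.mem_Ioi, Set.mem_inter_iff, Set.mem_setOf_eq]
          by_cases ht : t ∈ Set.Ioi (0:ℝ)
          · rw [Set.indicator_of_mem ht]
            exact ⟨fun h => ⟨h, ht⟩, fun h => h.1⟩
          · rw [Set.indicator_of_notMem ht]
            constructor
            · intro h; exact absurd (lt_of_le_of_lt hl h) (lt_irrefl _)
            · intro h; exact absurd h.2 ht
        rw [this]; exact hRmeasset l
    · filter_upwards [ae_restrict_mem measurableSet_Ioc] with t ht
      exact (Set.indicator_of_mem (Set.mem_Ioi.mpr ht.1) R).symm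
  -- the layer cake representation of the integral
  set A : ℝ≥0∞ := ∫⁻ t in Set.Ioc (0:ℝ) s, ENNReal.ofReal (R t) with hA0
  have hA : A = ∫⁻ l in Set.Ioi (0:ℝ), min (ENNReal.ofReal s) (D l) := by
    rw [hA0, lintegral_eq_lintegral_meas_lt _ (Filter.Eventually.of_forall hRnonneg) hRaemeas]
    apply setLIntegral_congr_fun measurableSet_Ioi
    intro l hl
    dsimp only
    rw [Measure.restrict_apply' measurableSet_Ioc]
    have hseteq : {t : ℝ | l < R t} ∩ Set.Ioc 0 s
        = {t : ℝ | ENNReal.ofReal t < D l} ∩ Set.Ioc 0 s := by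
      ext t
      simp only [Set.mem_inter_iff, Set.mem_setOf_eq, Set.mem_Ioc]
      constructor
      · rintro ⟨h1, h2⟩; exact ⟨(hlt l hl t h2.1).1 h1, h2⟩
      · rintro ⟨h1, h2⟩; exact ⟨(hlt l hl t h2.1).2 h1, h2⟩
    rw [hseteq]
    rcases le_or_gt (ENNReal.ofReal s) (D l) with hcase | hcase
    · have hsub1 : Set.Ioo (0:ℝ) s ⊆ {t : ℝ | ENNReal.ofReal t < D l} ∩ Set.Ioc 0 s := by
        intro t ht
        exact ⟨lt_of_lt_of_le ((ENNReal.ofReal_lt_ofReal_iff hs).mpr ht.2) hcase,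
          ht.1, le_of_lt ht.2⟩
      have h1 : volume (Set.Ioo (0:ℝ) s)
          ≤ (volume : Measure ℝ) ({t : ℝ | ENNReal.ofReal t < D l} ∩ Set.Ioc 0 s) :=
        measure_mono hsub1
      have h2 : (volume : Measure ℝ) ({t : ℝ | ENNReal.ofReal t < D l} ∩ Set.Ioc 0 s)
          ≤ volume (Set.Ioc 0 s) := measure_mono Set.inter_subset_right
      rw [Real.volume_Ioo, sub_zero] at h1
      rw [Real.volume_Ioc, sub_zero] at h2
      rw [min_eq_left hcase]
      exact le_antisymm h2 h1
    · have hDlne : D l ≠ ⊤ := by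
        intro hcontra
        rw [hcontra] at hcase
        exact (not_lt.mpr le_top) hcase
      have hds : (D l).toReal < s := ENNReal.toReal_lt_of_lt_ofReal hcase
      have hseteq2 : {t : ℝ | ENNReal.ofReal t < D l} ∩ Set.Ioc 0 s
          = Set.Ioo 0 (D l).toReal := by
        ext t
        simp only [Set.mem_inter_iff, Set.mem_setOf_eq, Set.mem_Ioc, Set.mem_Ioo]
        constructor
        · rintro ⟨h1, h2, h3⟩
          exact ⟨h2, (ENNReal.ofReal_lt_iff_lt_toReal (le_of_lt h2) hDlne).mp h1⟩
        · rintro ⟨h1, h2⟩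
          exact ⟨(ENNReal.ofReal_lt_iff_lt_toReal (le_of_lt h1) hDlne).mpr h2,
            h1, le_of_lt (lt_trans h2 hds)⟩
      rw [hseteq2, Real.volume_Ioo, sub_zero, min_eq_right (le_of_lt hcase),
        ENNReal.ofReal_toReal hDlne]
  -- upper bound: A is at most any decomposition value
  have hub : ∀ g h : Ω → ℝ, Integrable g μ → MemLp h ⊤ μ → f = g + h →
      A ≤ eLpNorm g 1 μ + ENNReal.ofReal (s * (eLpNorm h ⊤ μ).toReal) := by
    intro g h hg hh hfgh
    set c := (eLpNorm h ⊤ μ).toReal with hc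
    have hcnn : 0 ≤ c := ENNReal.toReal_nonneg
    rw [hA, show Set.Ioi (0:ℝ) = Set.Ioc 0 c ∪ Set.Ioi c
      from (Set.Ioc_union_Ioi_eq_Ioi hcnn).symm,
      lintegral_union measurableSet_Ioi (Set.Ioc_disjoint_Ioi le_rfl)]
    have hpart1 : ∫⁻ l in Set.Ioc (0:ℝ) c, min (ENNReal.ofReal s) (D l)
        ≤ ENNReal.ofReal (s * c) := by
      calc ∫⁻ l in Set.Ioc (0:ℝ) c, min (ENNReal.ofReal s) (D l)
          ≤ ∫⁻ _ in Set.Ioc (0:ℝ) c, ENNReal.ofReal s :=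
            lintegral_mono fun l => min_le_left _ _
        _ = ENNReal.ofReal s * ENNReal.ofReal c := by
            rw [setLIntegral_const, Real.volume_Ioc, sub_zero]
        _ = ENNReal.ofReal (s * c) := (ENNReal.ofReal_mul hs.le).symm
    have hpart2 : ∫⁻ l in Set.Ioi c, min (ENNReal.ofReal s) (D l) ≤ eLpNorm g 1 μ := by
      have hstep1 : ∫⁻ l in Set.Ioi c, min (ENNReal.ofReal s) (D l)
          ≤ ∫⁻ l in Set.Ioi c, μ {x | (l - c) < |g x|} := by
        apply lintegral_mono
        intro l
        refine le_trans (min_le_right _ _) ?_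
        have h2 := hsub g h hfgh hh (l - c)
        rwa [sub_add_cancel] at h2
      have hanti2 : Antitone (fun l : ℝ => μ {x | (l - c) < |g x|}) := by
        intro a b hab
        apply measure_mono
        intro x hx
        have hcc : a - c ≤ b - c := by linarith
        exact lt_of_le_of_lt hcc hx
      have hmp := measurePreserving_add_right (volume : Measure ℝ) c
      have hpre : (fun x : ℝ => x + c) ⁻¹' Set.Ioi c = Set.Ioi (0:ℝ) := by
        ext x
        simp only [Set.mem_preimage, Set.mem_Ioi]
        constructor <;> intro <;> linarith
      have hstep2 := hmp.setLIntegral_comp_preimage (s := Set.Ioi c) measurableSet_Ioi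
        (f := fun l => μ {x | (l - c) < |g x|}) hanti2.measurable
      rw [hpre] at hstep2
      have hstep3 : ∫⁻ l in Set.Ioi (0:ℝ), μ {x | (l + c - c) < |g x|}
          = ∫⁻ l in Set.Ioi (0:ℝ), μ {x | l < |g x|} :=
        lintegral_congr fun l => by rw [add_sub_cancel_right]
      calc ∫⁻ l in Set.Ioi c, min (ENNReal.ofReal s) (D l)
          ≤ ∫⁻ l in Set.Ioi c, μ {x | (l - c) < |g x|} := hstep1
        _ = ∫⁻ l in Set.Ioi (0:ℝ), μ {x | l < |g x|} := by
            rw [← hstep2]; exact hstep3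
        _ = ∫⁻ x, ‖g x‖₊ ∂μ := (lintegral_nnnorm_eq_layercake μ hg.aemeasurable).symm
        _ = eLpNorm g 1 μ := by simp only [eLpNorm_one_eq_lintegral_enorm, enorm_eq_nnnorm]
    calc (∫⁻ l in Set.Ioc (0:ℝ) c, min (ENNReal.ofReal s) (D l))
          + ∫⁻ l in Set.Ioi c, min (ENNReal.ofReal s) (D l)
        ≤ ENNReal.ofReal (s * c) + eLpNorm g 1 μ := add_le_add hpart1 hpart2
      _ = eLpNorm g 1 μ + ENNReal.ofReal (s * c) := add_comm _ _
  have hAfin : A ≠ ⊤ := by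
    have hle := hub g₀ h₀ hg₀ hh₀ hfgh₀
    have hgfin : eLpNorm g₀ 1 μ ≠ ⊤ := by
      rw [eLpNorm_one_eq_lintegral_enorm]; exact hg₀.2.ne
    exact ne_top_of_le_ne_top (ENNReal.add_ne_top.mpr ⟨hgfin, ENNReal.ofReal_ne_top⟩) hle
  -- the optimal truncation level
  set lam : ℝ := R s with hlam
  have hlamnn : 0 ≤ lam := hRnonneg s
  have hDle : ∀ l, lam < l → D l ≤ ENNReal.ofReal s := by
    intro l hl
    obtain ⟨m, hm, hml⟩ := exists_lt_of_csInf_lt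
      (by obtain ⟨l₀, hl1, hl2⟩ := hSne s hs; exact ⟨l₀, hl1, hl2⟩) hl
    exact le_trans (hDanti (le_of_lt hml)) hm.2
  have hDgt : ∀ l, 0 < l → l < lam → ENNReal.ofReal s < D l := by
    intro l hl hllam
    by_contra hc
    push_neg at hc
    have : lam ≤ l := csInf_le ⟨0, fun m hm => le_of_lt hm.1⟩ ⟨hl, hc⟩
    linarith
  -- optimal decomposition: truncation at level lam
  set h1 : Ω → ℝ := fun x => max (-lam) (min lam (f x)) with hh1def
  set g1 : Ω → ℝ := fun x => f x - h1 x with hg1def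
  have hfg1h1 : f = g1 + h1 := by
    funext x
    simp only [hg1def, Pi.add_apply]
    ring
  have hh1meas : Measurable h1 := measurable_const.max (measurable_const.min hmeas)
  have hg1meas : Measurable g1 := hmeas.sub hh1meas
  have hh1bd : ∀ x, |h1 x| ≤ lam := by
    intro x
    rw [abs_le]
    exact ⟨le_max_left _ _, max_le (by linarith) (min_le_left _ _)⟩
  have hh1mem : MemLp h1 ⊤ μ :=
    memLp_top_of_bound hh1meas.aestronglyMeasurable lam
      (Filter.Eventually.of_forall fun x => by rw [Real.norm_eq_abs]; exact hh1bd x)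
  have hh1norm : (eLpNorm h1 ⊤ μ).toReal ≤ lam := by
    have hb := eLpNorm_le_of_ae_bound (μ := μ) (p := ⊤) (f := h1)
      (Filter.Eventually.of_forall fun x => by rw [Real.norm_eq_abs]; exact hh1bd x)
    simp only [ENNReal.toReal_top, inv_zero, ENNReal.rpow_zero, one_mul] at hb
    exact ENNReal.toReal_le_of_le_ofReal hlamnn hb
  have habsg1 : ∀ x, |g1 x| = max (|f x| - lam) 0 := by
    intro x
    by_cases hc1 : lam < f x
    · have he1 : h1 x = lam := by
        simp only [hh1def]
        rw [min_eq_left (le_of_lt hc1), max_eq_right (neg_le_self hlamnn)]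
      have he2 : g1 x = f x - lam := by simp only [hg1def]; rw [he1]
      rw [he2, abs_of_nonneg (by linarith : (0:ℝ) ≤ f x - lam),
        abs_of_nonneg (by linarith : (0:ℝ) ≤ f x), max_eq_left (by linarith)]
    · by_cases hc2 : f x < -lam
      · have he1 : h1 x = -lam := by
          simp only [hh1def]
          rw [min_eq_right (by linarith : f x ≤ lam), max_eq_left (le_of_lt hc2)]
        have he2 : g1 x = f x + lam := by simp only [hg1def]; rw [he1]; ring
        rw [he2, abs_of_nonpos (by linarith : f x + lam ≤ 0),
          abs_of_neg (by linarith : f x < 0), max_eq_left (by linarith)]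
        ring
      · push_neg at hc1 hc2
        have he1 : h1 x = f x := by
          simp only [hh1def]
          rw [min_eq_right hc1, max_eq_right hc2]
        have he2 : g1 x = 0 := by simp only [hg1def]; rw [he1]; ring
        have hfb : |f x| ≤ lam := abs_le.mpr ⟨hc2, hc1⟩
        rw [he2, abs_zero, max_eq_right (by linarith)]
  have hDg1 : ∀ l, 0 < l → μ {x | l < |g1 x|} = D (l + lam) := by
    intro l hl
    congr 1
    ext x
    simp only [Set.mem_setOf_eq, habsg1 x]
    rw [lt_max_iff]
    constructor
    · rintro (h | h)
      · linarith
      · linarith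
    · intro h; left; linarith
  have hg1norm : ∫⁻ x, ‖g1 x‖₊ ∂μ = ∫⁻ l in Set.Ioi lam, D l := by
    rw [lintegral_nnnorm_eq_layercake μ hg1meas.aemeasurable]
    have he1 : ∫⁻ l in Set.Ioi (0:ℝ), μ {x | l < |g1 x|}
        = ∫⁻ l in Set.Ioi (0:ℝ), D (l + lam) :=
      setLIntegral_congr_fun measurableSet_Ioi
        (fun l hl => hDg1 l hl)
    rw [he1]
    have hmp := measurePreserving_add_right (volume : Measure ℝ) lam
    have hpre : (fun x : ℝ => x + lam) ⁻¹' Set.Ioi lam = Set.Ioi (0:ℝ) := by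
      ext x
      simp only [Set.mem_preimage, Set.mem_Ioi]
      constructor <;> intro <;> linarith
    have hstep := hmp.setLIntegral_comp_preimage (s := Set.Ioi lam) measurableSet_Ioi (f := D) hDmeas
    rw [hpre] at hstep
    exact hstep
  have hAeq : A = ENNReal.ofReal (s * lam) + ∫⁻ l in Set.Ioi lam, D l := by
    rw [hA, show Set.Ioi (0:ℝ) = Set.Ioc 0 lam ∪ Set.Ioi lam
      from (Set.Ioc_union_Ioi_eq_Ioi hlamnn).symm,
      lintegral_union measurableSet_Ioi (Set.Ioc_disjoint_Ioi le_rfl)]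
    congr 1
    · rw [← setLIntegral_congr (MeasureTheory.Ioo_ae_eq_Ioc (a := (0:ℝ)) (b := lam))]
      have he2 : ∫⁻ l in Set.Ioo (0:ℝ) lam, min (ENNReal.ofReal s) (D l)
          = ∫⁻ _ in Set.Ioo (0:ℝ) lam, ENNReal.ofReal s :=
        setLIntegral_congr_fun measurableSet_Ioo
          (fun l hl =>
            min_eq_left (le_of_lt (hDgt l hl.1 hl.2)))
      rw [he2, setLIntegral_const, Real.volume_Ioo, sub_zero,
        ← ENNReal.ofReal_mul hs.le]
    · exact setLIntegral_congr_fun measurableSet_Ioi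
        (fun l hl => min_eq_right (hDle l hl))
  have hIoifin : ∫⁻ l in Set.Ioi lam, D l ≠ ⊤ := by
    intro hcontra
    apply hAfin
    rw [hAeq, hcontra]
    exact add_top _
  have hg1eLp : eLpNorm g1 1 μ = ∫⁻ l in Set.Ioi lam, D l := by
    rw [eLpNorm_one_eq_lintegral_enorm]; exact hg1norm
  have hg1int : Integrable g1 μ := by
    rw [← memLp_one_iff_integrable]
    exact ⟨hg1meas.aestronglyMeasurable, by rw [hg1eLp]; exact hIoifin.lt_top⟩
  -- conclusion
  have hmemopt : (eLpNorm g1 1 μ).toReal + s * (eLpNorm h1 ⊤ μ).toReal ∈ Kset :=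
    ⟨g1, h1, hg1int, hh1mem, hfg1h1, rfl⟩
  have hlbd : ∀ r ∈ Kset, A.toReal ≤ r := by
    rintro r ⟨g, h, hg, hh, hfgh, rfl⟩
    have hle := hub g h hg hh hfgh
    have hgfin : eLpNorm g 1 μ ≠ ⊤ := by
      rw [eLpNorm_one_eq_lintegral_enorm]; exact hg.2.ne
    have hmono := ENNReal.toReal_mono
      (ENNReal.add_ne_top.mpr ⟨hgfin, ENNReal.ofReal_ne_top⟩) hle
    rwa [ENNReal.toReal_add hgfin ENNReal.ofReal_ne_top,
      ENNReal.toReal_ofReal (mul_nonneg hs.le ENNReal.toReal_nonneg)] at hmono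
  have hAval : A.toReal = s * lam + (∫⁻ l in Set.Ioi lam, D l).toReal := by
    rw [hAeq, ENNReal.toReal_add ENNReal.ofReal_ne_top hIoifin,
      ENNReal.toReal_ofReal (mul_nonneg hs.le hlamnn)]
  have hoptle : (eLpNorm g1 1 μ).toReal + s * (eLpNorm h1 ⊤ μ).toReal ≤ A.toReal := by
    rw [hAval, hg1eLp]
    have := mul_le_mul_of_nonneg_left hh1norm hs.le
    linarith
  have hKbdd : BddBelow Kset := ⟨A.toReal, fun r hr => hlbd r hr⟩
  have hle1 : sInf Kset ≤ A.toReal := le_trans (csInf_le hKbdd hmemopt) hoptle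
  have hle2 : A.toReal ≤ sInf Kset := le_csInf ⟨_, hmemopt⟩ hlbd
  have hLHS : ∫ t in Set.Ioc (0:ℝ) s, R t = A.toReal := by
    rw [integral_eq_lintegral_of_nonneg_ae (Filter.Eventually.of_forall hRnonneg)
      hRaemeas.aestronglyMeasurable]
  show ∫ t in Set.Ioc (0:ℝ) s, R t = sInf Kset
  rw [hLHS]
  exact le_antisymm hle2 hle1
end

section
/- Define f_n : (0, ∞) → ℝ by f_n(t) = Σ_{k=1}^{n} 2^k · 1_{(2^{-k}, 2^{-k+1}]}(t). Then each f_n is Lebesgue integrable on (0, ∞), the sequence {f_n} converges almost uniformly (with respect to Lebesgue measure) to the function f(t) = Σ_{k=1}^{∞} 2^k · 1_{(2^{-k}, 2^{-k+1}]}(t), the limit f satisfies ν{f > λ} < ∞ for every λ > 0 (so f belongs to Fava's space R₀), but f is not Lebesgue integrable. -/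
open MeasureTheory Filter

/-- The `k`-th layer `2^k · χ_{(2^{-k}, 2^{-k+1}]}`. -/
noncomputable def layer (k : ℕ) : ℝ → ℝ :=
  Set.indicator (Set.Ioc ((2:ℝ) ^ (-(k:ℤ))) ((2:ℝ) ^ (1 - (k:ℤ)))) (fun _ => (2:ℝ) ^ k)

lemma layer_nonneg (k : ℕ) (t : ℝ) : 0 ≤ layer k t :=
  Set.indicator_nonneg (fun _ _ => by positivity) t

lemma layer_eq_zero (k : ℕ) {t : ℝ} (ht : (2:ℝ) ^ (1 - (k:ℤ)) < t) : layer k t = 0 := by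
  apply Set.indicator_of_notMem
  exact fun h => absurd h.2 (not_le.mpr ht)

lemma layer_zero_of_nonpos (k : ℕ) {t : ℝ} (ht : t ≤ 0) : layer k t = 0 := by
  apply Set.indicator_of_notMem
  intro h
  have h0 : (0:ℝ) < (2:ℝ) ^ (-(k:ℤ)) := by positivity
  linarith [h.1]

lemma layer_succ_vanish {n k : ℕ} (hk : n ≤ k) {t : ℝ}
    (ht : (2:ℝ) ^ (-(n:ℤ)) < t) : layer (k + 1) t = 0 := by
  apply layer_eq_zero
  calc (2:ℝ) ^ (1 - ((k+1:ℕ):ℤ)) ≤ (2:ℝ) ^ (-(n:ℤ)) := by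
        apply zpow_le_zpow_right₀ one_le_two; push_cast; omega
    _ < t := ht

lemma exists_small (t : ℝ) (ht : 0 < t) : ∃ n : ℕ, (2:ℝ) ^ (-(n:ℤ)) < t := by
  obtain ⟨n, hn⟩ := exists_pow_lt_of_lt_one ht (by norm_num : (1/2:ℝ) < 1)
  refine ⟨n, ?_⟩
  rw [zpow_neg, zpow_natCast]
  simpa [one_div, inv_pow] using hn

lemma layer_summable (t : ℝ) : Summable (fun k : ℕ => layer (k + 1) t) := by
  rcases le_or_gt t 0 with h | h
  · simp only [layer_zero_of_nonpos _ h]; exact summable_zero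
  · obtain ⟨n, hn⟩ := exists_small t h
    exact summable_of_ne_finset_zero (s := Finset.range n)
      (fun k hk => layer_succ_vanish (by simpa using hk) hn)

lemma icc_sum_eq (n : ℕ) (t : ℝ) :
    ∑ k ∈ Finset.Icc 1 n, layer k t = ∑ k ∈ Finset.range n, layer (k + 1) t := by
  induction n with
  | zero => simp
  | succ m ih =>
    rw [Finset.sum_Icc_succ_top (by omega : 1 ≤ m + 1), Finset.sum_range_succ, ih]

lemma partial_eq_tsum {n : ℕ} {t : ℝ} (ht : (2:ℝ) ^ (-(n:ℤ)) < t) :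
    ∑ k ∈ Finset.Icc 1 n, layer k t = ∑' k : ℕ, layer (k + 1) t := by
  rw [tsum_eq_sum (s := Finset.range n)
    (fun k hk => layer_succ_vanish (by simpa using hk) ht), icc_sum_eq]

lemma layer_integrable (k : ℕ) :
    Integrable (layer k) (volume.restrict (Set.Ioi (0:ℝ))) := by
  unfold layer
  rw [integrable_indicator_iff measurableSet_Ioc]
  refine (integrableOn_const_iff (by simp)).mpr (Or.inr ?_)
  refine lt_of_le_of_lt (Measure.restrict_apply_le _ _) ?_
  rw [Real.volume_Ioc]; exact ENNReal.ofReal_lt_top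

lemma layer_integral (k : ℕ) :
    ∫ t, layer k t ∂(volume.restrict (Set.Ioi (0:ℝ))) = 1 := by
  have hpos : (0:ℝ) < (2:ℝ) ^ (-(k:ℤ)) := by positivity
  have hsub : Set.Ioc ((2:ℝ) ^ (-(k:ℤ))) ((2:ℝ) ^ (1 - (k:ℤ))) ⊆ Set.Ioi (0:ℝ) :=
    fun x hx => lt_trans hpos hx.1
  unfold layer
  rw [integral_indicator_const _ measurableSet_Ioc, measureReal_def, Measure.restrict_apply measurableSet_Ioc,
    Set.inter_eq_left.mpr hsub, Real.volume_Ioc]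
  have hdiff : (2:ℝ) ^ (1 - (k:ℤ)) - (2:ℝ) ^ (-(k:ℤ)) = (2:ℝ) ^ (-(k:ℤ)) := by
    rw [sub_eq_add_neg (1:ℤ), zpow_add₀ (two_ne_zero), zpow_one]; ring
  rw [hdiff, ENNReal.toReal_ofReal hpos.le, smul_eq_mul, ← zpow_natCast (2:ℝ) k,
    ← zpow_add₀ (two_ne_zero)]
  simp

/-- The partial sums `f_n = Σ_{k=1}^n 2^k χ_{(2^{-k},2^{-k+1}]}` are integrable on `(0,∞)`,
converge almost uniformly to `f = Σ_{k=1}^∞ 2^k χ_{(2^{-k},2^{-k+1}]}`, the limit `f`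
has finite distribution function at every positive level (so `f ∈ R₀`), yet `f` is not
integrable.  Hence `L¹` is not complete for almost uniform convergence. -/
theorem L1_not_au_complete :
    (∀ n : ℕ, Integrable (fun t => ∑ k ∈ Finset.Icc 1 n, layer k t)
      (volume.restrict (Set.Ioi (0:ℝ)))) ∧
    (∀ ε : ℝ, 0 < ε → ∃ E : Set ℝ, MeasurableSet E ∧
      (volume.restrict (Set.Ioi (0:ℝ))) Eᶜ ≤ ENNReal.ofReal ε ∧
      TendstoUniformlyOn (fun n t => ∑ k ∈ Finset.Icc 1 n, layer k t)
        (fun t => ∑' k : ℕ, layer (k + 1) t) atTop E) ∧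
    (∀ l : ℝ, 0 < l →
      (volume.restrict (Set.Ioi (0:ℝ))) {t | l < ∑' k : ℕ, layer (k + 1) t} < ⊤) ∧
    ¬ Integrable (fun t => ∑' k : ℕ, layer (k + 1) t)
        (volume.restrict (Set.Ioi (0:ℝ))) := by
  have hInt : ∀ n : ℕ, Integrable (fun t => ∑ k ∈ Finset.Icc 1 n, layer k t)
      (volume.restrict (Set.Ioi (0:ℝ))) :=
    fun n => integrable_finset_sum _ (fun k _ => layer_integrable k)
  refine ⟨hInt, ?_, ?_, ?_⟩
  · -- almost uniform convergence
    intro ε hε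
    obtain ⟨n₀, hn₀⟩ := exists_small ε hε
    refine ⟨Set.Ioi ((2:ℝ) ^ (-(n₀:ℤ))), measurableSet_Ioi, ?_, ?_⟩
    · rw [Set.compl_Ioi, Measure.restrict_apply measurableSet_Iic]
      have : Set.Iic ((2:ℝ) ^ (-(n₀:ℤ))) ∩ Set.Ioi (0:ℝ)
          = Set.Ioc (0:ℝ) ((2:ℝ) ^ (-(n₀:ℤ))) := by
        ext x; simp [Set.mem_Ioc, and_comm]
      rw [this, Real.volume_Ioc, sub_zero]
      exact ENNReal.ofReal_le_ofReal hn₀.le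
    · intro u hu
      filter_upwards [eventually_ge_atTop n₀] with n hn t ht
      have h2 : (2:ℝ) ^ (-(n:ℤ)) < t :=
        lt_of_le_of_lt (zpow_le_zpow_right₀ one_le_two (by omega)) ht
      rw [← partial_eq_tsum h2]
      exact refl_mem_uniformity hu
  · -- finite distribution
    intro l hl
    have hsub : {t : ℝ | l < ∑' k : ℕ, layer (k + 1) t} ⊆ Set.Ioc (0:ℝ) 1 := by
      intro t ht
      simp only [Set.mem_setOf_eq] at ht
      have hne : ∃ k : ℕ, layer (k + 1) t ≠ 0 := by
        by_contra h
        push_neg at h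
        rw [tsum_congr (fun k => h k), tsum_zero] at ht
        linarith
      obtain ⟨k, hk⟩ := hne
      have hmem : t ∈ Set.Ioc ((2:ℝ) ^ (-((k+1:ℕ):ℤ))) ((2:ℝ) ^ (1 - ((k+1:ℕ):ℤ))) := by
        by_contra h
        exact hk (Set.indicator_of_notMem h _)
      constructor
      · exact lt_trans (by positivity) hmem.1
      · refine le_trans hmem.2 ?_
        calc (2:ℝ) ^ (1 - ((k+1:ℕ):ℤ)) ≤ (2:ℝ) ^ (0:ℤ) := by
              apply zpow_le_zpow_right₀ one_le_two; push_cast; omega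
          _ = 1 := zpow_zero 2
    calc (volume.restrict (Set.Ioi (0:ℝ))) {t | l < ∑' k : ℕ, layer (k + 1) t}
        ≤ volume {t : ℝ | l < ∑' k : ℕ, layer (k + 1) t} := Measure.restrict_apply_le _ _
      _ ≤ volume (Set.Ioc (0:ℝ) 1) := measure_mono hsub
      _ < ⊤ := by rw [Real.volume_Ioc]; exact ENNReal.ofReal_lt_top
  · -- not integrable
    intro hf
    have key : ∀ n : ℕ, (n:ℝ) ≤ ∫ t, (∑' k : ℕ, layer (k + 1) t)
        ∂(volume.restrict (Set.Ioi (0:ℝ))) := by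
      intro n
      have h1 : ∫ t, (∑ k ∈ Finset.Icc 1 n, layer k t)
          ∂(volume.restrict (Set.Ioi (0:ℝ))) = n := by
        rw [integral_finset_sum _ (fun k _ => layer_integrable k)]
        simp [layer_integral]
      have hmono : ∀ t : ℝ, ∑ k ∈ Finset.Icc 1 n, layer k t ≤ ∑' k : ℕ, layer (k + 1) t := by
        intro t
        rw [icc_sum_eq]
        exact Summable.sum_le_tsum _ (fun k _ => layer_nonneg _ _) (layer_summable t)
      have := integral_mono (hInt n) hf hmono
      linarith
    obtain ⟨n, hn⟩ := exists_nat_gt (∫ t, (∑' k : ℕ, layer (k + 1) t)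
        ∂(volume.restrict (Set.Ioi (0:ℝ))))
    linarith [key n]
end

section
/- Let (Ω, μ) be a measure space and let {f_n} be a sequence of measurable functions converging in measure to f (on sets of finite measure, or globally: for every δ > 0, μ{|f_n − f| > δ} → 0). Then for every t > 0 which is a point of continuity of μ_·(f), μ_t(f_n) → μ_t(f); in particular μ_t(f_n) → μ_t(f) for almost every t ∈ (0, ∞) with respect to Lebesgue measure. -/
open MeasureTheory Filter

namespace RearrAux

open ENNReal

variable {Ω : Type*} [MeasurableSpace Ω] (μ : Measure Ω)

/-- The defining set of the rearrangement. -/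
def S (g : Ω → ℝ) (t : ℝ) : Set ℝ :=
  {l : ℝ | 0 < l ∧ μ {x | l < |g x|} ≤ ENNReal.ofReal t}

lemma rearr_eq (g : Ω → ℝ) (t : ℝ) : rearrangement μ g t = sInf (S μ g t) := rfl

lemma bddBelow_S (g : Ω → ℝ) (t : ℝ) : BddBelow (S μ g t) :=
  ⟨0, fun _ hl => hl.1.le⟩

lemma rearr_nonneg (g : Ω → ℝ) (t : ℝ) : 0 ≤ rearrangement μ g t :=
  Real.sInf_nonneg fun _ hl => hl.1.le

/-- Key triangle-type inequality for distribution functions. -/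
lemma tail_le (g h : Ω → ℝ) (l δ : ℝ) :
    μ {x | l + δ < |g x|} ≤ μ {x | l < |h x|} + μ {x | δ < |g x - h x|} := by
  refine le_trans (measure_mono ?_) (measure_union_le _ _)
  intro x hx
  simp only [Set.mem_setOf_eq] at hx
  simp only [Set.mem_union, Set.mem_setOf_eq]
  by_contra hc
  push_neg at hc
  have h1 : |g x| - |h x| ≤ |g x - h x| := abs_sub_abs_le_abs_sub _ _
  linarith [hc.1, hc.2]

/-- If the defining set is empty at some `t > 0`, then all tails are infinite. -/
lemma tail_infinite (g : Ω → ℝ) (hg : Measurable g) {t : ℝ} (ht : 0 < t)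
    (hS : S μ g t = ∅) {l : ℝ} (hl : 0 < l) : μ {x | l < |g x|} = ∞ := by
  by_contra hfin
  have hmeas : ∀ n : ℕ, NullMeasurableSet {x | l + n < |g x|} μ := fun n =>
    (measurableSet_lt measurable_const hg.abs).nullMeasurableSet
  have hanti : Antitone fun n : ℕ => {x | l + (n : ℝ) < |g x|} := by
    intro m n hmn x hx
    simp only [Set.mem_setOf_eq] at hx ⊢
    have : (m : ℝ) ≤ n := Nat.cast_le.mpr hmn
    linarith
  have hiInter : (⋂ n : ℕ, {x | l + (n : ℝ) < |g x|}) = ∅ := by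
    ext x
    simp only [Set.mem_iInter, Set.mem_setOf_eq, Set.mem_empty_iff_false, iff_false, not_forall,
      not_lt]
    obtain ⟨n, hn⟩ := exists_nat_gt (|g x| - l)
    exact ⟨n, by linarith⟩
  have htendsto := tendsto_measure_iInter_atTop hmeas hanti
    ⟨0, by simpa using hfin⟩
  rw [hiInter] at htendsto
  simp only [measure_empty] at htendsto
  have := htendsto.eventually_lt_const (ENNReal.ofReal_pos.mpr ht)
  obtain ⟨n, hn⟩ := this.exists
  have : (l + n : ℝ) ∈ S μ g t :=
    ⟨by positivity, le_of_lt (by simpa using hn)⟩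
  rw [hS] at this
  exact this

/-- If the defining set is empty at some `t > 0`, then it is empty at every `s`. -/
lemma S_empty_all (g : Ω → ℝ) (hg : Measurable g) {t : ℝ} (ht : 0 < t)
    (hS : S μ g t = ∅) (s : ℝ) : S μ g s = ∅ := by
  ext m
  simp only [Set.mem_empty_iff_false, iff_false]
  rintro ⟨hm, hle⟩
  rw [tail_infinite μ g hg ht hS hm] at hle
  exact ENNReal.ofReal_ne_top (top_le_iff.mp hle)

/-- The rearrangement is antitone on `(0, ∞)`. -/
lemma rearr_antitoneOn (g : Ω → ℝ) (hg : Measurable g) :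
    AntitoneOn (rearrangement μ g) (Set.Ioi 0) := by
  intro t₁ ht₁ t₂ _ h12
  rcases Set.eq_empty_or_nonempty (S μ g t₁) with hE | hne
  · rw [rearr_eq, rearr_eq, hE, S_empty_all μ g hg ht₁ hE t₂]
  · refine csInf_le_csInf (bddBelow_S μ g t₂) hne ?_
    rintro l ⟨hl, hle⟩
    exact ⟨hl, hle.trans (ENNReal.ofReal_le_ofReal h12)⟩

end RearrAux

open RearrAux in
/-- If `f n → f` in measure, then `μ_t(f n) → μ_t(f)` at every continuity point `t > 0`
of `t ↦ μ_t(f)`; in particular for Lebesgue-almost every `t ∈ (0,∞)`. -/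
theorem rearrangement_tendsto_of_tendstoInMeasure
    {Ω : Type*} [MeasurableSpace Ω] (μ : Measure Ω)
    (f : ℕ → Ω → ℝ) (fhat : Ω → ℝ)
    (hmeas : ∀ n, Measurable (f n)) (hmeashat : Measurable fhat)
    (hmeasconv : ∀ δ : ℝ, 0 < δ →
      Tendsto (fun n => μ {x | δ < |f n x - fhat x|}) atTop (nhds 0)) :
    (∀ t : ℝ, 0 < t → ContinuousAt (rearrangement μ fhat) t →
      Tendsto (fun n => rearrangement μ (f n) t) atTop (nhds (rearrangement μ fhat t))) ∧
    (∀ᵐ t ∂(volume.restrict (Set.Ioi (0:ℝ))),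
      Tendsto (fun n => rearrangement μ (f n) t) atTop (nhds (rearrangement μ fhat t))) := by
  have habs : ∀ (n : ℕ) (δ : ℝ), {x | δ < |fhat x - f n x|} = {x | δ < |f n x - fhat x|} := by
    intro n δ; ext x; simp [abs_sub_comm]
  have part1 : ∀ t : ℝ, 0 < t → ContinuousAt (rearrangement μ fhat) t →
      Tendsto (fun n => rearrangement μ (f n) t) atTop (nhds (rearrangement μ fhat t)) := by
    intro t ht hcont
    rw [Metric.tendsto_atTop]
    intro ε hε
    set a := rearrangement μ fhat t with ha
    obtain ⟨η, hη, hη'⟩ := Metric.continuousAt_iff.mp hcont (ε/2) (by positivity)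
    obtain ⟨t', ht'0, ht't, hd'⟩ : ∃ t', 0 < t' ∧ t' < t ∧ dist t' t < η := by
      refine ⟨max (t/2) (t - η/2), lt_max_of_lt_left (by linarith),
        max_lt (by linarith) (by linarith), ?_⟩
      rw [Real.dist_eq, abs_lt]
      constructor
      · have h := le_max_right (t/2) (t - η/2)
        have h2 := max_lt (show t/2 < t by linarith) (show t - η/2 < t by linarith)
        linarith
      · have h2 := max_lt (show t/2 < t by linarith) (show t - η/2 < t by linarith)
        linarith
    obtain ⟨t'', htt'', hd''⟩ : ∃ t'', t < t'' ∧ dist t'' t < η := by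
      refine ⟨t + η/2, by linarith, ?_⟩
      rw [Real.dist_eq, abs_lt]
      constructor <;> [skip; skip] <;> ring_nf <;> linarith
    have hgt' : rearrangement μ fhat t' < a + ε/2 := by
      have := hη' hd'
      rw [Real.dist_eq, abs_lt] at this
      linarith [this.2]
    have hgt'' : a - ε/2 < rearrangement μ fhat t'' := by
      have := hη' hd''
      rw [Real.dist_eq, abs_lt] at this
      linarith [this.1]
    rcases Set.eq_empty_or_nonempty (S μ fhat t') with hE | hne
    · -- all tails of fhat infinite; eventually `S μ (f n) t` is empty and `a = 0`
      have ha0 : a = 0 := by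
        rw [ha, rearr_eq, S_empty_all μ fhat hmeashat ht'0 hE t, Real.sInf_empty]
      have hev := (hmeasconv 1 one_pos).eventually_lt_const (zero_lt_one (α := ENNReal))
      rw [eventually_atTop] at hev
      obtain ⟨N, hN⟩ := hev
      refine ⟨N, fun n hn => ?_⟩
      have hSn : S μ (f n) t = ∅ := by
        ext m
        simp only [Set.mem_empty_iff_false, iff_false]
        rintro ⟨hm, hle⟩
        have h1 : μ {x | m + 1 < |fhat x|} ≤ μ {x | m < |f n x|} + μ {x | 1 < |fhat x - f n x|} :=
          tail_le μ fhat (f n) m 1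
        rw [habs n 1] at h1
        rw [tail_infinite μ fhat hmeashat ht'0 hE (by positivity : (0:ℝ) < m + 1)] at h1
        have h2 : μ {x | m < |f n x|} + μ {x | 1 < |f n x - fhat x|} < ⊤ := by
          apply ENNReal.add_lt_top.mpr
          exact ⟨lt_of_le_of_lt hle (ENNReal.ofReal_lt_top), lt_of_lt_of_le (hN n hn) le_top⟩
        exact absurd (top_le_iff.mp h1) (ne_of_lt h2)
      have : rearrangement μ (f n) t = 0 := by rw [rearr_eq, hSn, Real.sInf_empty]
      rw [this, ha0]
      simpa using hε
    · -- main case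
      obtain ⟨l, hlS, hl⟩ := (csInf_lt_iff (bddBelow_S μ fhat t') hne).mp hgt'
      have hE1 := (hmeasconv (ε/4) (by positivity)).eventually_lt_const
        (ENNReal.ofReal_pos.mpr (by linarith : (0:ℝ) < t - t'))
      have hE2 := (hmeasconv (ε/2) (by positivity)).eventually_lt_const
        (ENNReal.ofReal_pos.mpr (by linarith : (0:ℝ) < t'' - t))
      rw [eventually_atTop] at hE1 hE2
      obtain ⟨N₁, hN₁⟩ := hE1
      obtain ⟨N₂, hN₂⟩ := hE2
      refine ⟨max N₁ N₂, fun n hn => ?_⟩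
      have hn₁ := hN₁ n (le_trans (le_max_left _ _) hn)
      have hn₂ := hN₂ n (le_trans (le_max_right _ _) hn)
      -- upper bound: l + ε/4 ∈ S μ (f n) t
      have hmem : l + ε/4 ∈ S μ (f n) t := by
        refine ⟨by linarith [hlS.1], ?_⟩
        calc μ {x | l + ε/4 < |f n x|}
            ≤ μ {x | l < |fhat x|} + μ {x | ε/4 < |f n x - fhat x|} := tail_le μ (f n) fhat l (ε/4)
          _ ≤ ENNReal.ofReal t' + ENNReal.ofReal (t - t') :=
              add_le_add hlS.2 hn₁.le
          _ = ENNReal.ofReal t := by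
              rw [← ENNReal.ofReal_add ht'0.le (by linarith)]
              ring_nf
      have hup : rearrangement μ (f n) t ≤ l + ε/4 := csInf_le (bddBelow_S μ (f n) t) hmem
      -- lower bound
      have hlow : rearrangement μ fhat t'' - ε/2 ≤ rearrangement μ (f n) t := by
        rw [rearr_eq μ (f n) t]
        refine le_csInf ⟨_, hmem⟩ ?_
        rintro m ⟨hm, hmle⟩
        have h1 : μ {x | m + ε/2 < |fhat x|}
            ≤ μ {x | m < |f n x|} + μ {x | ε/2 < |fhat x - f n x|} := tail_le μ fhat (f n) m (ε/2)
        rw [habs n (ε/2)] at h1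
        have h2 : m + ε/2 ∈ S μ fhat t'' := by
          refine ⟨by positivity, ?_⟩
          calc μ {x | m + ε/2 < |fhat x|}
              ≤ ENNReal.ofReal t + ENNReal.ofReal (t'' - t) :=
                h1.trans (add_le_add hmle hn₂.le)
            _ = ENNReal.ofReal t'' := by
                rw [← ENNReal.ofReal_add ht.le (by linarith)]
                ring_nf
        have := csInf_le (bddBelow_S μ fhat t'') h2
        rw [← rearr_eq] at this
        linarith
      rw [Real.dist_eq, abs_lt]
      constructor <;> linarith
  refine ⟨part1, ?_⟩
  -- a.e. continuity of the antitone rearrangement on (0,∞)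
  have hanti := rearr_antitoneOn μ fhat hmeashat
  have hcount : Set.Countable {t : ℝ | 0 < t ∧ ¬ ContinuousAt (rearrangement μ fhat) t} := by
    have hsub : {t : ℝ | 0 < t ∧ ¬ ContinuousAt (rearrangement μ fhat) t} ⊆
        ⋃ k : ℕ, {t : ℝ | 1/(k+1) < t ∧ ¬ ContinuousAt (rearrangement μ fhat) t} := by
      rintro t ⟨ht, hc⟩
      obtain ⟨k, hk⟩ := exists_nat_one_div_lt ht
      exact Set.mem_iUnion.mpr ⟨k, hk, hc⟩
    refine Set.Countable.mono hsub (Set.countable_iUnion fun k => ?_)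
    set c : ℝ := 1/(k+1) with hc
    have hc0 : 0 < c := by positivity
    have hG : Antitone (fun s : ℝ => rearrangement μ fhat (max s c)) := by
      intro s₁ s₂ h12
      exact hanti (Set.mem_Ioi.mpr (lt_of_lt_of_le hc0 (le_max_right _ _)))
        (Set.mem_Ioi.mpr (lt_of_lt_of_le hc0 (le_max_right _ _)))
        (max_le_max h12 le_rfl)
    refine Set.Countable.mono ?_ hG.countable_not_continuousAt
    rintro t ⟨ht, hcont⟩
    simp only [Set.mem_setOf_eq]
    intro hGc
    apply hcont
    have heq : (fun s : ℝ => rearrangement μ fhat (max s c)) =ᶠ[nhds t]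
        rearrangement μ fhat := by
      filter_upwards [Ioi_mem_nhds ht] with s hs
      rw [max_eq_left (le_of_lt hs)]
    exact hGc.congr heq
  have h1 : ∀ᵐ t ∂(volume.restrict (Set.Ioi (0:ℝ))), t ∈ Set.Ioi (0:ℝ) :=
    ae_restrict_mem measurableSet_Ioi
  have h2 : ∀ᵐ t ∂(volume.restrict (Set.Ioi (0:ℝ))),
      t ∉ {t : ℝ | 0 < t ∧ ¬ ContinuousAt (rearrangement μ fhat) t} := by
    have hz : volume.restrict (Set.Ioi (0:ℝ))
        {t : ℝ | 0 < t ∧ ¬ ContinuousAt (rearrangement μ fhat) t} = 0 := by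
      refine le_antisymm ?_ zero_le
      calc volume.restrict (Set.Ioi (0:ℝ))
            {t : ℝ | 0 < t ∧ ¬ ContinuousAt (rearrangement μ fhat) t}
          ≤ volume {t : ℝ | 0 < t ∧ ¬ ContinuousAt (rearrangement μ fhat) t} :=
            Measure.restrict_le_self _
        _ = 0 := hcount.measure_zero _
    exact measure_eq_zero_iff_ae_notMem.mp hz
  filter_upwards [h1, h2] with t ht hnot
  have hct : ContinuousAt (rearrangement μ fhat) t := by
    by_contra hcc
    exact hnot ⟨ht, hcc⟩
  exact part1 t ht hct
end
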